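/- arXiv:2411.14195 — 6 statements merged into one kernel-verified Lean document; each statement's English description precedes it below -/
import Mathlib

section
/- For every integer n ≥ 2 and every symmetric convex body K ⊂ ℝⁿ there exists a rotation U ∈ SO(n) such that the inclusion Q_{k-1}(U K) ⊆ 3 · Q_k(U K) holds for every k ∈ {2, …, n}. -/
open Set Pointwise RealInnerProductSpace

/-- Greedy orthonormal family: each direction is maximal over the projection of `K`
onto the orthogonal complement of the previous ones. -/
theorem exists_good_family : ∀ (m : ℕ) (E : Type) [NormedAddCommGroup E]
    [InnerProductSpace ℝ E] [FiniteDimensional ℝ E], Module.finrank ℝ E = m →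
    ∀ (K : Set E), IsCompact K → Convex ℝ K → K.Nonempty → (∀ x ∈ K, -x ∈ K) →
    ∃ v : Fin m → E, Orthonormal ℝ v ∧
      ∀ j, ∃ z ∈ K, (∀ i, j < i → ⟪z, v i⟫ = 0) ∧ ∀ x ∈ K, ⟪x, v j⟫ ≤ ⟪z, v j⟫ := by
  intro m
  induction m with
  | zero =>
    intro E _ _ _ _ K _ _ _ _
    exact ⟨Fin.elim0, ⟨fun i => i.elim0, fun i => i.elim0⟩, fun j => j.elim0⟩
  | succ m IH =>
    intro E _ _ _ hrank K hKc hKconv hKne hKneg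
    obtain ⟨z₀, hz₀K, hz₀max⟩ := hKc.exists_isMaxOn hKne (continuous_norm.continuousOn)
    by_cases hz₀ : z₀ = 0
    · -- K = {0}
      have hK0 : ∀ x ∈ K, x = 0 := by
        intro x hx
        have := hz₀max hx
        simp only [hz₀, norm_zero] at this
        exact norm_le_zero_iff.mp this
      refine ⟨((stdOrthonormalBasis ℝ E).reindex (finCongr hrank)),
        ((stdOrthonormalBasis ℝ E).reindex (finCongr hrank)).orthonormal, ?_⟩
      intro j
      refine ⟨z₀, hz₀K, fun i _ => by simp [hz₀], fun x hx => ?_⟩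
      rw [hK0 x hx, hz₀]
    · -- main case
      set u : E := ‖z₀‖⁻¹ • z₀ with hu
      have hz₀n : ‖z₀‖ ≠ 0 := norm_ne_zero_iff.mpr hz₀
      have hun : ‖u‖ = 1 := norm_smul_inv_norm hz₀
      set W : Submodule ℝ E := (ℝ ∙ z₀)ᗮ with hW
      have hWrank : Module.finrank ℝ W = m := by
        have h1 : Module.finrank ℝ (ℝ ∙ z₀) = 1 := finrank_span_singleton hz₀
        have h2 := Submodule.finrank_add_finrank_orthogonal (K := (ℝ ∙ z₀ : Submodule ℝ E))
        rw [hW]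
        omega
      have huW : ∀ w : W, ⟪u, (w : E)⟫ = 0 := by
        intro w
        have huspan : u ∈ (ℝ ∙ z₀) := Submodule.smul_mem _ _ (Submodule.mem_span_singleton_self z₀)
        exact w.2 u huspan
      set P := W.orthogonalProjectionOnto with hP
      have key : ∀ (x : E) (y : W), ⟪x, (y : E)⟫ = ⟪P x, y⟫ := by
        intro x y
        exact (Submodule.inner_orthogonalProjectionOnto_eq_of_mem_right (K := W) y x).symm
      set K' : Set W := P '' K with hK'
      have hK'c : IsCompact K' := hKc.image (ContinuousLinearMap.continuous P)
      have hK'conv : Convex ℝ K' := hKconv.linear_image (P : E →ₗ[ℝ] W)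
      have hK'ne : K'.Nonempty := hKne.image _
      have hK'neg : ∀ x ∈ K', -x ∈ K' := by
        rintro x ⟨y, hy, rfl⟩
        exact ⟨-y, hKneg y hy, by simp⟩
      obtain ⟨v', hv'on, hv'⟩ := IH W hWrank K' hK'c hK'conv hK'ne hK'neg
      set v : Fin (m+1) → E := Fin.cons u (fun i => (v' i : E)) with hv
      have hvon : Orthonormal ℝ v := by
        rw [orthonormal_iff_ite]
        intro i j
        refine Fin.cases ?_ ?_ i <;> [skip; intro i'] <;> refine Fin.cases ?_ ?_ j
        · simpa [v, real_inner_self_eq_norm_sq, hun]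
        · intro j'
          simpa [v, Fin.succ_ne_zero, (Fin.succ_ne_zero j').symm] using huW (v' j')
        · have := huW (v' i')
          rw [real_inner_comm] at this
          simpa [v, (Fin.succ_ne_zero i').symm, Fin.succ_ne_zero] using this
        · intro j'
          have := orthonormal_iff_ite.mp hv'on i' j'
          have hco : ⟪(v' i' : E), (v' j' : E)⟫ = ⟪v' i', v' j'⟫ := rfl
          simp only [v, Fin.cons_succ, hco, this, Fin.succ_inj]
      refine ⟨v, hvon, ?_⟩
      intro j
      refine Fin.cases ?_ ?_ j
      · -- j = 0, witness z₀
        refine ⟨z₀, hz₀K, ?_, ?_⟩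
        · intro i
          refine Fin.cases ?_ ?_ i
          · intro h; exact absurd h (lt_irrefl _)
          · intro i' _
            have : (z₀ : E) ∈ (ℝ ∙ z₀) := Submodule.mem_span_singleton_self z₀
            simpa [v] using (v' i').2 z₀ this
        · intro x hx
          have h1 : ⟪x, u⟫ = ‖z₀‖⁻¹ * ⟪x, z₀⟫ := real_inner_smul_right x z₀ _
          have h2 : ⟪z₀, u⟫ = ‖z₀‖ := by
            rw [hu, real_inner_smul_right, real_inner_self_eq_norm_sq]
            field_simp
          have h3 : ⟪x, z₀⟫ ≤ ‖x‖ * ‖z₀‖ := real_inner_le_norm x z₀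
          have h4 : ‖x‖ ≤ ‖z₀‖ := hz₀max hx
          have h5 : (0:ℝ) ≤ ‖z₀‖⁻¹ := by positivity
          calc ⟪x, v 0⟫ = ‖z₀‖⁻¹ * ⟪x, z₀⟫ := by simpa [v] using h1
            _ ≤ ‖z₀‖⁻¹ * (‖x‖ * ‖z₀‖) := mul_le_mul_of_nonneg_left h3 h5
            _ ≤ ‖z₀‖⁻¹ * (‖z₀‖ * ‖z₀‖) := mul_le_mul_of_nonneg_left
                (mul_le_mul_of_nonneg_right h4 (norm_nonneg z₀)) h5
            _ = ‖z₀‖ := by field_simp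
            _ = ⟪z₀, v 0⟫ := by simpa [v] using h2.symm
      · -- j = succ j'
        intro j'
        obtain ⟨z', hz'K', hz'0, hz'max⟩ := hv' j'
        obtain ⟨w, hwK, hwP⟩ := hz'K'
        refine ⟨w, hwK, ?_, ?_⟩
        · intro i
          refine Fin.cases ?_ ?_ i
          · intro h; exact absurd h (Fin.not_lt_zero _)
          · intro i' hii
            have hlt : j' < i' := by simpa [Fin.succ_lt_succ_iff] using hii
            have hkey : ⟪w, (v' i' : E)⟫ = ⟪P w, v' i'⟫ := key w (v' i')
            rw [hwP] at hkey
            simpa [v] using hkey.trans (hz'0 i' hlt)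
        · intro x hx
          have h1 : ⟪x, (v' j' : E)⟫ = ⟪P x, v' j'⟫ := key x (v' j')
          have h2 : ⟪w, (v' j' : E)⟫ = ⟪z', v' j'⟫ := by
            have := key w (v' j'); rwa [hwP] at this
          have h3 : ⟪P x, v' j'⟫ ≤ ⟪z', v' j'⟫ := hz'max (P x) ⟨x, hx, rfl⟩
          simpa [v, h1, h2] using h3


noncomputable def coordProj {n : ℕ} (S : Finset (Fin n)) (x : EuclideanSpace ℝ (Fin n)) :
    EuclideanSpace ℝ (Fin n) :=
  WithLp.toLp 2 (fun j => if j ∈ S then x j else 0)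

noncomputable def kConvexHull (n k : ℕ) (K : Set (EuclideanSpace ℝ (Fin n))) :
    Set (EuclideanSpace ℝ (Fin n)) :=
  ⋂ S ∈ {S : Finset (Fin n) | S.card = k}, coordProj S ⁻¹' (coordProj S '' K)

lemma coordProj_apply {n : ℕ} (S : Finset (Fin n)) (x : EuclideanSpace ℝ (Fin n)) (i : Fin n) :
    coordProj S x i = if i ∈ S then x i else 0 := rfl

lemma mem_kConvexHull {n k : ℕ} {K : Set (EuclideanSpace ℝ (Fin n))}
    {x : EuclideanSpace ℝ (Fin n)} :
    x ∈ kConvexHull n k K ↔ ∀ S : Finset (Fin n), S.card = k →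
      coordProj S x ∈ coordProj S '' K := by
  simp [kConvexHull]

theorem main_incl (n : ℕ) (C : Set (EuclideanSpace ℝ (Fin n)))
    (hconv : Convex ℝ C) (hneg : ∀ p ∈ C, -p ∈ C)
    (hstar : ∀ j : Fin n, ∃ z ∈ C, (∀ i, j < i → z i = 0) ∧ ∀ x ∈ C, x j ≤ z j)
    (k : ℕ) (hk2 : 2 ≤ k) (hkn : k ≤ n) :
    kConvexHull n (k-1) C ⊆ (3 : ℝ) • kConvexHull n k C := by
  have hscale : ∀ (s : ℝ), |s| ≤ 1 → ∀ p ∈ C, s • p ∈ C := by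
    intro s hs p hp
    have h1 : s • p = ((1+s)/2) • p + ((1-s)/2) • (-p) := by
      rw [smul_neg]
      rw [abs_le] at hs
      module
    rw [h1]
    have hs' : |s| ≤ 1 := hs
    rw [abs_le] at hs'
    exact hconv hp (hneg p hp) (by linarith) (by linarith) (by ring)
  intro x hx
  rw [Set.mem_smul_set_iff_inv_smul_mem₀ (by norm_num : (3:ℝ) ≠ 0)]
  rw [mem_kConvexHull] at hx ⊢
  intro S hS
  -- j = min S
  have hSne : S.Nonempty := Finset.card_pos.mp (by omega)
  set j := S.min' hSne with hj
  have hjS : j ∈ S := S.min'_mem hSne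
  obtain ⟨z, hzC, hz0, hzmax⟩ := hstar j
  have hzj_nonneg : 0 ≤ z j := by
    have := hzmax (-z) (hneg z hzC)
    simp only [PiLp.neg_apply] at this
    linarith
  have habs : ∀ p ∈ C, |p j| ≤ z j := by
    intro p hp
    have h1 := hzmax p hp
    have h2 := hzmax (-p) (hneg p hp)
    simp only [PiLp.neg_apply] at h2
    rw [abs_le]; constructor <;> linarith
  -- bound on x j via a (k-1)-set containing j
  obtain ⟨T', hjT', hT'univ, hT'card⟩ :=
    Finset.exists_subsuperset_card_eq (n := k - 1) (Finset.subset_univ {j})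
      (by rw [Finset.card_singleton]; omega)
      (by simp only [Finset.card_univ, Fintype.card_fin]; omega)
  obtain ⟨w', hw'C, hw'⟩ := hx T' hT'card
  have hxj : |x j| ≤ z j := by
    have hjmem : j ∈ T' := hjT' (Finset.mem_singleton_self j)
    have : w' j = x j := by
      have := congrFun (congrArg WithLp.ofLp hw') j
      simpa [coordProj_apply, hjmem] using this
    rw [← this]; exact habs w' hw'C
  -- witness w from T = S.erase j
  set T : Finset (Fin n) := S.erase j with hT
  have hTcard : T.card = k - 1 := by rw [hT, Finset.card_erase_of_mem hjS, hS]
  obtain ⟨w, hwC, hw⟩ := hx T hTcard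
  have hwi : ∀ i ∈ S, i ≠ j → w i = x i := by
    intro i hiS hij
    have hiT : i ∈ T := Finset.mem_erase.mpr ⟨hij, hiS⟩
    have := congrFun (congrArg WithLp.ofLp hw) i
    simpa [coordProj_apply, hiT] using this
  have hwj : |w j| ≤ z j := habs w hwC
  -- the scalar t
  set t : ℝ := if z j = 0 then 0 else (x j - w j) / z j with ht
  have htle : |t| ≤ 2 := by
    rw [ht]
    split_ifs with h
    · norm_num
    · have hzpos : 0 < z j := lt_of_le_of_ne hzj_nonneg (Ne.symm h)
      rw [abs_div, abs_of_pos hzpos, div_le_iff₀ hzpos]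
      calc |x j - w j| ≤ |x j| + |w j| := abs_sub _ _
        _ ≤ 2 * z j := by linarith
  have htz : t * z j = x j - w j := by
    rw [ht]
    split_ifs with h
    · have h1 : |x j| ≤ 0 := h ▸ hxj
      have h2 : |w j| ≤ 0 := h ▸ hwj
      have := abs_nonneg (x j)
      have := abs_nonneg (w j)
      have hx0 : x j = 0 := abs_eq_zero.mp (le_antisymm h1 (abs_nonneg _))
      have hw0 : w j = 0 := abs_eq_zero.mp (le_antisymm h2 (abs_nonneg _))
      rw [hx0, hw0]; ring
    · field_simp
  -- the candidate point
  have hq : (t/2) • z ∈ C := hscale (t/2) (by rw [abs_div]; simp; linarith [htle, abs_nonneg t]) z hzC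
  set c : EuclideanSpace ℝ (Fin n) := (1/3 : ℝ) • w + (2/3 : ℝ) • ((t/2) • z) with hc
  have hcC : c ∈ C := hconv hwC hq (by norm_num) (by norm_num) (by norm_num)
  refine ⟨c, hcC, ?_⟩
  ext i
  simp only [coordProj_apply]
  by_cases hiS : i ∈ S
  · simp only [hiS, if_true]
    have hci : c i = (w i + t * z i)/3 := by
      simp only [hc, PiLp.add_apply, PiLp.smul_apply, smul_eq_mul]
      ring
    have hxi : ((3:ℝ)⁻¹ • x) i = 3⁻¹ * x i := rfl
    rw [hci, hxi]
    by_cases hij : i = j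
    · rw [hij, htz]; ring
    · rw [hwi i hiS hij, hz0 i (lt_of_le_of_ne (S.min'_le i hiS) (fun h => hij h.symm))]
      ring
  · simp [hiS]


/-- Negation of one coordinate, as a linear isometry equivalence. -/
noncomputable def negCoord (n : ℕ) (j0 : Fin n) :
    EuclideanSpace ℝ (Fin n) ≃ₗᵢ[ℝ] EuclideanSpace ℝ (Fin n) :=
  LinearIsometryEquiv.piLpCongrRight 2
    (fun i => if i = j0 then LinearIsometryEquiv.neg ℝ else LinearIsometryEquiv.refl ℝ ℝ)

lemma negCoord_apply (n : ℕ) (j0 : Fin n) (x : EuclideanSpace ℝ (Fin n)) (i : Fin n) :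
    negCoord n j0 x i = if i = j0 then -x i else x i := by
  rw [negCoord, LinearIsometryEquiv.piLpCongrRight_apply]
  by_cases h : i = j0 <;> simp [h] <;> subst h <;> rfl

lemma det_negCoord (n : ℕ) (j0 : Fin n) :
    LinearMap.det ((negCoord n j0).toLinearEquiv : EuclideanSpace ℝ (Fin n) →ₗ[ℝ]
      EuclideanSpace ℝ (Fin n)) = -1 := by
  classical
  set a := (EuclideanSpace.basisFun (Fin n) ℝ).toBasis with ha
  rw [← LinearMap.det_toMatrix a]
  have hM : LinearMap.toMatrix a a ((negCoord n j0).toLinearEquiv :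
      EuclideanSpace ℝ (Fin n) →ₗ[ℝ] EuclideanSpace ℝ (Fin n)) =
      Matrix.diagonal (fun i => if i = j0 then (-1 : ℝ) else 1) := by
    ext i j
    rw [LinearMap.toMatrix_apply]
    have hrepr : ∀ y : EuclideanSpace ℝ (Fin n), a.repr y i = y i := fun y => rfl
    rw [hrepr]
    have haj : (a j : EuclideanSpace ℝ (Fin n)) = EuclideanSpace.single j 1 := by
      rw [ha]
      simp [EuclideanSpace.basisFun_apply]
    have : ((negCoord n j0).toLinearEquiv : EuclideanSpace ℝ (Fin n) →ₗ[ℝ]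
        EuclideanSpace ℝ (Fin n)) (a j) = negCoord n j0 (EuclideanSpace.single j 1) := by
      rw [haj]; rfl
    rw [this, negCoord_apply]
    rw [EuclideanSpace.single_apply]
    rw [Matrix.diagonal_apply]
    by_cases hij : i = j <;> by_cases hj0 : i = j0 <;> simp [hij, hj0] <;> split_ifs <;> simp_all
  rw [hM, Matrix.det_diagonal]
  rw [Finset.prod_ite_eq' Finset.univ j0 (fun _ => (-1 : ℝ))]
  simp

lemma det_repr_pm (n : ℕ) (b : OrthonormalBasis (Fin n) ℝ (EuclideanSpace ℝ (Fin n))) :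
    LinearMap.det ((b.repr).toLinearEquiv : EuclideanSpace ℝ (Fin n) →ₗ[ℝ]
      EuclideanSpace ℝ (Fin n)) = 1 ∨
    LinearMap.det ((b.repr).toLinearEquiv : EuclideanSpace ℝ (Fin n) →ₗ[ℝ]
      EuclideanSpace ℝ (Fin n)) = -1 := by
  classical
  set a := EuclideanSpace.basisFun (Fin n) ℝ with ha
  have hdet : LinearMap.det ((b.repr).toLinearEquiv : EuclideanSpace ℝ (Fin n) →ₗ[ℝ]
      EuclideanSpace ℝ (Fin n)) = b.toBasis.det ⇑a.toBasis := by
    rw [← LinearMap.det_toMatrix a.toBasis, Module.Basis.det_apply]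
    congr 1
    ext i j
    rw [LinearMap.toMatrix_apply, Module.Basis.toMatrix_apply]
    have h1 : ∀ y : EuclideanSpace ℝ (Fin n), a.toBasis.repr y i = y i := fun y => rfl
    rw [h1]
    have h2 : b.toBasis.repr (a.toBasis j) i = b.repr (a.toBasis j) i :=
      (b.coe_toBasis_repr_apply _ _).symm
    rw [h2]
    rfl
  rw [hdet]
  exact b.det_to_matrix_orthonormalBasis_real a


/-- For every `n ≥ 2` and every symmetric convex body `K ⊆ ℝⁿ` there is `U ∈ SO(n)` such
that `Q_{k-1}(UK) ⊆ 3 • Q_k(UK)` for every `k ∈ {2, …, n}`. -/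
theorem stmt_0 (n : ℕ) (hn : 2 ≤ n) (K : Set (EuclideanSpace ℝ (Fin n)))
    (hKcomp : IsCompact K) (hKconv : Convex ℝ K) (hKint : (interior K).Nonempty)
    (hKsym : K = -K) :
    ∃ U : EuclideanSpace ℝ (Fin n) ≃ₗᵢ[ℝ] EuclideanSpace ℝ (Fin n),
      LinearMap.det (U.toLinearEquiv : EuclideanSpace ℝ (Fin n) →ₗ[ℝ]
        EuclideanSpace ℝ (Fin n)) = 1 ∧
      ∀ k : ℕ, 2 ≤ k → k ≤ n →
        kConvexHull n (k - 1) (⇑U '' K) ⊆ (3 : ℝ) • kConvexHull n k (⇑U '' K) := by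
  classical
  have hKne : K.Nonempty := hKint.mono interior_subset
  have hKneg : ∀ x ∈ K, -x ∈ K := by
    intro x hx
    rw [hKsym]
    exact Set.neg_mem_neg.mpr hx
  obtain ⟨v, hvon, hv⟩ := exists_good_family n (EuclideanSpace ℝ (Fin n))
    finrank_euclideanSpace_fin K hKcomp hKconv hKne hKneg
  haveI : Nonempty (Fin n) := ⟨⟨0, by omega⟩⟩
  have hcard : Fintype.card (Fin n) = Module.finrank ℝ (EuclideanSpace ℝ (Fin n)) := by
    simp [finrank_euclideanSpace_fin]
  set B := basisOfOrthonormalOfCardEqFinrank hvon hcard with hBdef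
  have hB : ⇑B = v := coe_basisOfOrthonormalOfCardEqFinrank _ _
  have hsp : ⊤ ≤ Submodule.span ℝ (Set.range v) := by
    rw [← hB]
    exact B.span_eq.ge
  set b := OrthonormalBasis.mk hvon hsp with hbdef
  have hbcoe : ⇑b = v := OrthonormalBasis.coe_mk _ _
  -- star property for the image of K under b.repr
  have hstar0 : ∀ j : Fin n, ∃ zc ∈ ⇑b.repr '' K, (∀ i, j < i → zc i = 0) ∧
      ∀ x ∈ ⇑b.repr '' K, x j ≤ zc j := by
    intro j
    obtain ⟨z, hzK, hz0, hzmax⟩ := hv j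
    refine ⟨b.repr z, ⟨z, hzK, rfl⟩, ?_, ?_⟩
    · intro i hi
      rw [b.repr_apply_apply, hbcoe, real_inner_comm]
      exact hz0 i hi
    · rintro x ⟨y, hyK, rfl⟩
      rw [b.repr_apply_apply, b.repr_apply_apply, hbcoe]
      rw [real_inner_comm y (v j), real_inner_comm z (v j)]
      exact hzmax y hyK
  -- the common glue
  have hmain : ∀ (U : EuclideanSpace ℝ (Fin n) ≃ₗᵢ[ℝ] EuclideanSpace ℝ (Fin n)),
      (∀ j : Fin n, ∃ zc ∈ ⇑U '' K, (∀ i, j < i → zc i = 0) ∧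
        ∀ x ∈ ⇑U '' K, x j ≤ zc j) →
      ∀ k : ℕ, 2 ≤ k → k ≤ n →
        kConvexHull n (k - 1) (⇑U '' K) ⊆ (3 : ℝ) • kConvexHull n k (⇑U '' K) := by
    intro U hst k hk2 hkn
    have hconv : Convex ℝ (⇑U '' K) :=
      hKconv.linear_image (U.toLinearEquiv : EuclideanSpace ℝ (Fin n) →ₗ[ℝ]
        EuclideanSpace ℝ (Fin n))
    have hneg : ∀ p ∈ ⇑U '' K, -p ∈ ⇑U '' K := by
      rintro p ⟨x, hx, rfl⟩
      exact ⟨-x, hKneg x hx, by simp⟩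
    exact main_incl n (⇑U '' K) hconv hneg hst k hk2 hkn
  rcases det_repr_pm n b with h1 | h1
  · exact ⟨b.repr, h1, hmain b.repr hstar0⟩
  · set j0 : Fin n := ⟨0, by omega⟩ with hj0
    set F := negCoord n j0 with hF
    set U := (b.repr).trans F with hU
    have hcomp : ⇑U = ⇑F ∘ ⇑b.repr := rfl
    have himg : ⇑U '' K = ⇑F '' (⇑b.repr '' K) := by
      rw [hcomp, Set.image_comp]
    have hdet : LinearMap.det (U.toLinearEquiv : EuclideanSpace ℝ (Fin n) →ₗ[ℝ]
        EuclideanSpace ℝ (Fin n)) = 1 := by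
      have hcompl : (U.toLinearEquiv : EuclideanSpace ℝ (Fin n) →ₗ[ℝ]
          EuclideanSpace ℝ (Fin n)) =
          (F.toLinearEquiv : EuclideanSpace ℝ (Fin n) →ₗ[ℝ] EuclideanSpace ℝ (Fin n)) ∘ₗ
          ((b.repr).toLinearEquiv : EuclideanSpace ℝ (Fin n) →ₗ[ℝ]
            EuclideanSpace ℝ (Fin n)) := rfl
      rw [hcompl, LinearMap.det_comp, det_negCoord, h1]
      norm_num
    have hCneg : ∀ p ∈ ⇑b.repr '' K, -p ∈ ⇑b.repr '' K := by
      rintro p ⟨x, hx, rfl⟩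
      exact ⟨-x, hKneg x hx, by simp⟩
    have hstarU : ∀ j : Fin n, ∃ zc ∈ ⇑U '' K, (∀ i, j < i → zc i = 0) ∧
        ∀ x ∈ ⇑U '' K, x j ≤ zc j := by
      intro j
      obtain ⟨z, hzC, hz0, hzmax⟩ := hstar0 j
      by_cases hjj : j = j0
      · refine ⟨F (-z), ?_, ?_, ?_⟩
        · rw [himg]
          exact ⟨-z, hCneg z hzC, rfl⟩
        · intro i hi
          have hij0 : i ≠ j0 := by
            intro h
            rw [hjj, ← h] at hi
            exact absurd hi (lt_irrefl _)
          rw [negCoord_apply, if_neg hij0]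
          simp [hz0 i hi]
        · rintro x hxm
          rw [himg] at hxm
          obtain ⟨y, hyC, rfl⟩ := hxm
          rw [negCoord_apply, negCoord_apply, hjj, if_pos rfl, if_pos rfl]
          have := hzmax (-y) (hCneg y hyC)
          simp only [PiLp.neg_apply] at this ⊢
          rw [← hjj]
          simpa using this
      · refine ⟨F z, ?_, ?_, ?_⟩
        · rw [himg]
          exact ⟨z, hzC, rfl⟩
        · intro i hi
          rw [negCoord_apply]
          split_ifs <;> simp [hz0 i hi]
        · rintro x hxm
          rw [himg] at hxm
          obtain ⟨y, hyC, rfl⟩ := hxm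
          rw [negCoord_apply, negCoord_apply, if_neg hjj, if_neg hjj]
          exact hzmax y hyC
    exact ⟨U, hdet, hmain U hstarU⟩
end

section
/- Let C be a closed, convex, bounded set with nonempty interior in a real Hilbert space H and let 𝐞 be a complete orthonormal system for H. Then for every positive integer k, the k-convex hull Q_k(𝐞, C) is closed in the norm topology of H. -/
open Set

/-- Orthogonal projection of a Hilbert space `H` onto the closed span of `T ⊆ H`,
viewed as a map `H → H`. -/
noncomputable def projCl {H : Type*} [NormedAddCommGroup H] [InnerProductSpace ℝ H]
    [CompleteSpace H] (T : Set H) : H →L[ℝ] H :=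
  haveI : CompleteSpace ((Submodule.span ℝ T).topologicalClosure) :=
    (Submodule.isClosed_topologicalClosure _).completeSpace_coe
  ((Submodule.span ℝ T).topologicalClosure).subtypeL.comp
    (Submodule.orthogonalProjectionOnto ((Submodule.span ℝ T).topologicalClosure))

/-- `E ⊆ H` is a complete orthonormal system: its elements are pairwise orthogonal unit
vectors and its span is dense in `H`. -/
def IsCompleteONS {H : Type*} [NormedAddCommGroup H] [InnerProductSpace ℝ H]
    (E : Set H) : Prop :=
  Orthonormal ℝ ((↑) : E → H) ∧ (Submodule.span ℝ E).topologicalClosure = ⊤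

/-- The `k`-convex hull of `C ⊆ H` with respect to the orthonormal system `E`. -/
noncomputable def kConvexHullH {H : Type*} [NormedAddCommGroup H] [InnerProductSpace ℝ H]
    [CompleteSpace H] (E : Set H) (k : ℕ) (C : Set H) : Set H :=
  ⋂ S ∈ {S : Set H | S ⊆ E ∧ S.Finite ∧ S.ncard = k}, projCl S ⁻¹' (projCl S '' C)

open Filter Topology

/-- Cantor intersection lemma for nested nonempty closed bounded convex sets in a
Hilbert space. -/
lemma nested_convex_nonempty_iInter {H : Type*} [NormedAddCommGroup H]
    [InnerProductSpace ℝ H] [CompleteSpace H] (C : ℕ → Set H) (hne : ∀ n, (C n).Nonempty)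
    (hcl : ∀ n, IsClosed (C n)) (hconv : ∀ n, Convex ℝ (C n))
    (hbdd : Bornology.IsBounded (C 0)) (hanti : Antitone C) :
    (⋂ n, C n).Nonempty := by
  have key : ∀ n, ∃ v ∈ C n, ‖v‖ = ⨅ w : C n, ‖(w : H)‖ := by
    intro n
    obtain ⟨v, hv, hv2⟩ := exists_norm_eq_iInf_of_complete_convex (hne n)
      ((hcl n).isComplete) (hconv n) 0
    refine ⟨v, hv, ?_⟩
    simpa using hv2
  choose m hm hmn using key
  set d : ℕ → ℝ := fun n => ⨅ w : C n, ‖(w : H)‖ with hd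
  haveI : ∀ n, Nonempty (C n) := fun n => (hne n).to_subtype
  have hbdd0 : ∀ n, BddBelow (Set.range fun w : C n => ‖(w : H)‖) := fun n =>
    ⟨0, by rintro _ ⟨w, rfl⟩; exact norm_nonneg _⟩
  have hdle : ∀ n, ∀ x ∈ C n, d n ≤ ‖x‖ := fun n x hx =>
    ciInf_le (hbdd0 n) (⟨x, hx⟩ : C n)
  obtain ⟨M, hM⟩ := hbdd.exists_norm_le
  have hMn : ∀ n, d n ≤ M := fun n =>
    (hdle n (m n) (hm n)).trans (hM _ (hanti (Nat.zero_le n) (hm n)))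
  have hdmono : Monotone d := fun n k hnk =>
    (hdle n (m k) (hanti hnk (hm k))).trans_eq (hmn k)
  set L : ℝ := ⨆ n, d n with hL
  have hbddA : BddAbove (Set.range d) := ⟨M, by rintro _ ⟨n, rfl⟩; exact hMn n⟩
  have hdL : ∀ n, d n ≤ L := fun n => le_ciSup hbddA n
  have hdtend : Tendsto d atTop (𝓝 L) := tendsto_atTop_ciSup hdmono hbddA
  have hdn0 : ∀ n, (0:ℝ) ≤ d n := fun n => le_ciInf fun w => norm_nonneg _
  have hest : ∀ n k, n ≤ k → ‖m n - m k‖ ^ 2 ≤ 2 * L ^ 2 - 2 * d n ^ 2 := by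
    intro n k hnk
    have hmk : m k ∈ C n := hanti hnk (hm k)
    have hmid : (1/2 : ℝ) • m n + (1/2 : ℝ) • m k ∈ C n :=
      (hconv n) (hm n) hmk (by norm_num) (by norm_num) (by norm_num)
    have h1 : d n ≤ ‖(1/2 : ℝ) • m n + (1/2 : ℝ) • m k‖ := hdle n _ hmid
    have heq : ‖(1/2 : ℝ) • m n + (1/2 : ℝ) • m k‖ = (1/2) * ‖m n + m k‖ := by
      rw [← smul_add, norm_smul]; simp
    have h2 : (2 : ℝ) * d n ≤ ‖m n + m k‖ := by
      rw [heq] at h1; linarith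
    have hpar := parallelogram_law_with_norm ℝ (m n) (m k)
    have h3 : (2 * d n) ^ 2 ≤ ‖m n + m k‖ ^ 2 :=
      pow_le_pow_left₀ (by linarith [hdn0 n]) h2 2
    have h5 : d k ^ 2 ≤ L ^ 2 := pow_le_pow_left₀ (hdn0 k) (hdL k) 2
    have e1 : ‖m n‖ = d n := hmn n
    have e2 : ‖m k‖ = d k := hmn k
    have hpar2 : ‖m n + m k‖ ^ 2 + ‖m n - m k‖ ^ 2 = 2 * (d n ^ 2 + d k ^ 2) := by
      rw [← e1, ← e2]; simpa [pow_two] using hpar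
    nlinarith [hpar2, h3, h5]
  have hcauchy : CauchySeq m := by
    rw [Metric.cauchySeq_iff]
    intro ε hε
    have hev : ∀ᶠ n in atTop, L ^ 2 - d n ^ 2 < ε ^ 2 / 4 := by
      have h0 : Tendsto (fun n => L ^ 2 - d n ^ 2) atTop (𝓝 (L ^ 2 - L ^ 2)) :=
        tendsto_const_nhds.sub (hdtend.pow 2)
      rw [sub_self] at h0
      exact h0.eventually (gt_mem_nhds (show (0:ℝ) < ε ^ 2 / 4 by positivity))
    obtain ⟨N, hN⟩ := eventually_atTop.1 hev
    refine ⟨N, fun n hn k hk => ?_⟩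
    have main : ∀ a b, N ≤ a → a ≤ b → dist (m a) (m b) < ε := by
      intro a b ha hab
      have h1 : ‖m a - m b‖ ^ 2 ≤ 2 * L ^ 2 - 2 * d a ^ 2 := hest a b hab
      have h2 : L ^ 2 - d a ^ 2 < ε ^ 2 / 4 := hN a ha
      have h3 : dist (m a) (m b) ^ 2 < ε ^ 2 := by
        rw [dist_eq_norm]; nlinarith
      exact lt_of_pow_lt_pow_left₀ 2 (le_of_lt hε) h3
    rcases le_total n k with h | h
    · exact main n k hn h
    · rw [dist_comm]; exact main k n hk h
  obtain ⟨x, hx⟩ := cauchySeq_tendsto_of_complete hcauchy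
  refine ⟨x, Set.mem_iInter.2 fun n => ?_⟩
  exact (hcl n).mem_of_tendsto hx (eventually_atTop.2
    ⟨n, fun k hk => hanti hk (hm k)⟩)

/-- The image of a nonempty closed bounded convex set under a continuous linear map on a
Hilbert space is closed. -/
lemma image_isClosed {H : Type*} [NormedAddCommGroup H] [InnerProductSpace ℝ H]
    [CompleteSpace H] (P : H →L[ℝ] H) {C : Set H} (hne : C.Nonempty) (hcl : IsClosed C)
    (hconv : Convex ℝ C) (hbdd : Bornology.IsBounded C) : IsClosed (P '' C) := by
  rw [← closure_subset_iff_isClosed]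
  intro y hy
  set D : ℕ → Set H := fun n => C ∩ P ⁻¹' Metric.closedBall y (1/(n+1)) with hD
  have hDne : ∀ n, (D n).Nonempty := by
    intro n
    have hpos : (0:ℝ) < 1/(n+1) := by positivity
    obtain ⟨b, hb, hdist⟩ := Metric.mem_closure_iff.1 hy _ hpos
    obtain ⟨c, hc, rfl⟩ := hb
    exact ⟨c, hc, by simpa [Metric.mem_closedBall, dist_comm] using hdist.le⟩
  have hDcl : ∀ n, IsClosed (D n) := fun n =>
    hcl.inter (Metric.isClosed_closedBall.preimage P.continuous)
  have hDconv : ∀ n, Convex ℝ (D n) := fun n =>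
    hconv.inter ((convex_closedBall y _).linear_preimage (P : H →ₗ[ℝ] H))
  have hDbdd : Bornology.IsBounded (D 0) := hbdd.subset Set.inter_subset_left
  have hanti : Antitone D := by
    intro a b hab
    apply Set.inter_subset_inter_right
    apply Set.preimage_mono
    apply Metric.closedBall_subset_closedBall
    gcongr
  obtain ⟨c, hc⟩ := nested_convex_nonempty_iInter D hDne hDcl hDconv hDbdd hanti
  simp only [Set.mem_iInter, Set.mem_inter_iff, Set.mem_preimage,
    Metric.mem_closedBall] at hc
  have hdist0 : dist (P c) y ≤ 0 :=
    ge_of_tendsto' tendsto_one_div_add_atTop_nhds_zero_nat fun n => (hc n).2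
  have : P c = y := by
    rw [← dist_eq_zero]
    exact le_antisymm hdist0 dist_nonneg
  exact ⟨c, (hc 0).1, this⟩

/-- For a closed convex bounded set `C` with nonempty interior in a Hilbert space and a
complete orthonormal system `E`, the `k`-convex hull `Q_k(E, C)` is norm closed. -/
theorem stmt_3 {H : Type*} [NormedAddCommGroup H] [InnerProductSpace ℝ H] [CompleteSpace H]
    (C : Set H) (hCcl : IsClosed C) (hCconv : Convex ℝ C)
    (hCbdd : Bornology.IsBounded C) (hCint : (interior C).Nonempty)
    (E : Set H) (hE : IsCompleteONS E) (k : ℕ) (hk : 0 < k) :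
    IsClosed (kConvexHullH E k C) := by
  have hCne : C.Nonempty := hCint.mono interior_subset
  refine isClosed_biInter fun S hS => ?_
  exact (image_isClosed (projCl S) hCne hCcl hCconv hCbdd).preimage (projCl S).continuous
end

section
/- Let C be a symmetric convex body in a real Hilbert space H. For every δ > 0, there exists a complete orthonormal system 𝐞 in H such that Q_{k-1}(𝐞, C) ⊆ (3 + δ) · Q_k(𝐞, C) for every integer k ≥ 2. -/
open Set Pointwise

set_option linter.unusedSectionVars false
set_option linter.unusedVariables false

universe u

section Auxiliary

variable {H : Type u} [NormedAddCommGroup H] [InnerProductSpace ℝ H] [CompleteSpace H]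

local notation "⟪" x ", " y "⟫" => @inner ℝ _ _ x y

/-- The closed span of a set. -/
noncomputable abbrev clSpan (T : Set H) : Submodule ℝ H :=
  (Submodule.span ℝ T).topologicalClosure

instance (T : Set H) : CompleteSpace (clSpan T) :=
  (Submodule.isClosed_topologicalClosure _).completeSpace_coe

lemma projCl_apply (T : Set H) (x : H) :
    projCl T x = (Submodule.orthogonalProjectionOnto (clSpan T) x : H) := rfl

lemma projCl_mem (T : Set H) (x : H) : projCl T x ∈ clSpan T := by
  rw [projCl_apply]; exact (Submodule.orthogonalProjectionOnto (clSpan T) x).2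

lemma projCl_eq_self {T : Set H} {x : H} (h : x ∈ clSpan T) : projCl T x = x := by
  rw [projCl_apply]
  exact congrArg _ (Submodule.orthogonalProjectionOnto_mem_subspace_eq_self (⟨x, h⟩ : clSpan T))

lemma sub_projCl_mem_orthogonal (T : Set H) (x : H) : x - projCl T x ∈ (clSpan T)ᗮ := by
  rw [projCl_apply]; have := Submodule.sub_starProjection_mem_orthogonal (K := clSpan T) x
  rwa [Submodule.starProjection_apply] at this

lemma inner_projCl {T : Set H} {v : H} (hv : v ∈ clSpan T) (x : H) :
    ⟪v, projCl T x⟫ = ⟪v, x⟫ := by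
  have h0 : ⟪v, x - projCl T x⟫ = 0 :=
    ((Submodule.mem_orthogonal _ _).1 (sub_projCl_mem_orthogonal T x) v hv)
  have := inner_sub_right (𝕜 := ℝ) v x (projCl T x)
  simp only [h0] at *
  linarith [inner_sub_right (𝕜 := ℝ) v x (projCl T x)]

lemma projCl_inner_comm (T : Set H) (x y : H) :
    ⟪projCl T x, y⟫ = ⟪x, projCl T y⟫ := by
  rw [projCl_apply, projCl_apply]
  have := Submodule.inner_starProjection_left_eq_right (clSpan T) x y
  rwa [Submodule.starProjection_apply, Submodule.starProjection_apply] at this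

lemma inner_clSpan_zero {f : H} {T : Set H} (h : ∀ t ∈ T, ⟪f, t⟫ = 0) :
    ∀ c ∈ clSpan T, ⟪f, c⟫ = 0 := by
  intro c hc
  have hle : clSpan T ≤ LinearMap.ker ((innerSL ℝ f : H →L[ℝ] ℝ) : H →ₗ[ℝ] ℝ) := by
    apply Submodule.topologicalClosure_minimal
    · rw [Submodule.span_le]
      intro t ht
      have h0 : innerSL ℝ f t = 0 := h t ht
      simpa [LinearMap.mem_ker] using h0
    · exact ContinuousLinearMap.isClosed_ker _
  have := hle hc
  simpa using this

/-- property of the next greedy vector -/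
def NextProp (C : Set H) (ε : ℝ) (T : Set H) (e : H) : Prop :=
  ‖e‖ = 1 ∧ (∀ f ∈ T, ⟪f, e⟫ = 0) ∧
    ∃ c ∈ C, c ∈ clSpan (insert e T) ∧ ∀ c' ∈ C, (1 - ε) * ⟪c', e⟫ ≤ ⟪c, e⟫

lemma exists_nextProp (C : Set H) {ε r R : ℝ} (hε : 0 < ε) (hε1 : ε < 1)
    (hr : Metric.ball (0 : H) r ⊆ C) (hr0 : 0 < r)
    (hR : ∀ c ∈ C, ‖c‖ ≤ R) (T : Set H) (hT : clSpan T ≠ ⊤) :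
    ∃ e, NextProp C ε T e := by
  classical
  set M : Submodule ℝ H := clSpan T with hM
  haveI : CompleteSpace M := inferInstance
  set q : H → H := fun c => c - (Submodule.orthogonalProjectionOnto M c : H) with hq
  have hqmem : ∀ c, q c ∈ Mᗮ := fun c => by
    have := Submodule.sub_starProjection_mem_orthogonal (K := M) c
    rwa [Submodule.starProjection_apply] at this
  have hqnorm : ∀ c, ‖q c‖ ≤ ‖c‖ := by
    intro c
    have h2 : ⟪(Submodule.orthogonalProjectionOnto M c : H), q c⟫ = 0 :=
      ((Submodule.mem_orthogonal _ _).1 (hqmem c) _ (Submodule.orthogonalProjectionOnto M c).2)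
    have hdecomp : c = (Submodule.orthogonalProjectionOnto M c : H) + q c := by simp [hq]
    have h3 : ‖c‖ ^ 2 = ‖(Submodule.orthogonalProjectionOnto M c : H)‖ ^ 2 + 2 * ⟪(Submodule.orthogonalProjectionOnto M c : H), q c⟫ + ‖q c‖ ^ 2 := by
      conv_lhs => rw [hdecomp]
      exact norm_add_sq_real _ _
    rw [h2] at h3
    nlinarith [norm_nonneg (q c), norm_nonneg (Submodule.orthogonalProjectionOnto M c : H), norm_nonneg c]
  -- exists c in C with q c ≠ 0
  have hCne : (0:H) ∈ C := hr (by simpa using hr0)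
  have hex : ∃ c ∈ C, q c ≠ 0 := by
    by_contra hcon
    push_neg at hcon
    apply hT
    have hsub : C ⊆ (M : Set H) := by
      intro c hc
      have : q c = 0 := hcon c hc
      have : c = (Submodule.orthogonalProjectionOnto M c : H) := by
        have := sub_eq_zero.1 this; simpa using this
      rw [this]; exact (Submodule.orthogonalProjectionOnto M c).2
    -- ball ⊆ M implies M = ⊤
    rw [Submodule.eq_top_iff']
    intro x
    rcases eq_or_ne x 0 with rfl | hx0
    · exact M.zero_mem
    · have hmem : (r / (2 * ‖x‖)) • x ∈ M := by
        apply hsub; apply hr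
        simp only [Metric.mem_ball, dist_zero_right, norm_smul, Real.norm_eq_abs]
        have hxpos : 0 < ‖x‖ := norm_pos_iff.2 hx0
        rw [abs_of_pos (by positivity)]
        rw [div_mul_eq_mul_div, mul_comm]
        calc ‖x‖ * r / (2 * ‖x‖) = r / 2 := by field_simp
        _ < r := by linarith
      have hne : (r / (2 * ‖x‖)) ≠ 0 := by
        have hxpos : 0 < ‖x‖ := norm_pos_iff.2 hx0
        positivity
      have := M.smul_mem (r / (2 * ‖x‖))⁻¹ hmem
      rwa [smul_smul, inv_mul_cancel₀ hne, one_smul] at this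
  obtain ⟨cw, hcwC, hcw0⟩ := hex
  -- the sup
  set A : Set ℝ := (fun c => ‖q c‖) '' C with hA
  have hAne : A.Nonempty := ⟨‖q cw‖, cw, hcwC, rfl⟩
  have hAbdd : BddAbove A := by
    refine ⟨R, ?_⟩
    rintro a ⟨c, hc, rfl⟩
    exact (hqnorm c).trans (hR c hc)
  set s := sSup A with hs
  have hspos : 0 < s := by
    have : ‖q cw‖ ≤ s := le_csSup hAbdd ⟨cw, hcwC, rfl⟩
    have : 0 < ‖q cw‖ := norm_pos_iff.2 hcw0
    linarith [le_csSup hAbdd (⟨cw, hcwC, rfl⟩ : ‖q cw‖ ∈ A)]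
  have hlt : (1 - ε) * s < s := by nlinarith
  obtain ⟨a, ⟨c₀, hc₀C, rfl⟩, hagt⟩ := exists_lt_of_lt_csSup hAne hlt
  have hagt' : (1 - ε) * s < ‖q c₀‖ := hagt
  have hqc₀ : q c₀ ≠ 0 := by
    intro h; rw [h] at hagt'; simp at hagt'; nlinarith
  have hqpos : 0 < ‖q c₀‖ := norm_pos_iff.2 hqc₀
  refine ⟨‖q c₀‖⁻¹ • q c₀, ?_, ?_, c₀, hc₀C, ?_, ?_⟩
  · rw [norm_smul]; simp [abs_of_pos (inv_pos.2 hqpos)]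
    field_simp
  · intro f hf
    have hfM : f ∈ M := Submodule.le_topologicalClosure _ (Submodule.subset_span hf)
    have := ((Submodule.mem_orthogonal _ _).1 (hqmem c₀) f hfM)
    rw [inner_smul_right, this, mul_zero]
  · -- c₀ ∈ clSpan (insert e T)
    set e := ‖q c₀‖⁻¹ • q c₀ with he
    have h1 : (Submodule.orthogonalProjectionOnto M c₀ : H) ∈ clSpan (insert e T) := by
      have hMle : M ≤ clSpan (insert e T) := by
        apply Submodule.topologicalClosure_mono
        exact Submodule.span_mono (subset_insert _ _)
      exact hMle (Submodule.orthogonalProjectionOnto M c₀).2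
    have h2 : q c₀ ∈ clSpan (insert e T) := by
      have : q c₀ = ‖q c₀‖ • e := by
        rw [he, smul_smul, mul_inv_cancel₀ (ne_of_gt hqpos), one_smul]
      rw [this]
      exact Submodule.smul_mem _ _ (Submodule.le_topologicalClosure _
        (Submodule.subset_span (mem_insert _ _)))
    have : c₀ = (Submodule.orthogonalProjectionOnto M c₀ : H) + q c₀ := by simp [hq]
    rw [this]; exact Submodule.add_mem _ h1 h2
  · -- dominance
    intro c' hc'
    set e := ‖q c₀‖⁻¹ • q c₀ with he
    have heM : e ∈ Mᗮ := Submodule.smul_mem _ _ (hqmem c₀)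
    have hinner : ∀ c : H, ⟪c, e⟫ = ⟪q c, e⟫ := by
      intro c
      have h0 : ⟪e, (Submodule.orthogonalProjectionOnto M c : H)⟫ = 0 :=
        ((Submodule.mem_orthogonal' _ _).1 heM _ (Submodule.orthogonalProjectionOnto M c).2)
      have h0' : ⟪c - q c, e⟫ = 0 := by
        have hcq : c - q c = (Submodule.orthogonalProjectionOnto M c : H) := by simp [hq]
        rw [hcq, real_inner_comm]; exact h0
      have := inner_sub_left (𝕜 := ℝ) c (q c) e
      rw [h0'] at this
      linarith [this]
    have hc₀e : ⟪c₀, e⟫ = ‖q c₀‖ := by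
      rw [hinner, he, real_inner_smul_right, real_inner_self_eq_norm_sq]
      field_simp
    have hc'e : ⟪c', e⟫ ≤ s := by
      rw [hinner]
      calc ⟪q c', e⟫ ≤ ‖q c'‖ * ‖e‖ := real_inner_le_norm _ _
        _ ≤ s * 1 := by
            have h1 : ‖q c'‖ ≤ s := le_csSup hAbdd ⟨c', hc', rfl⟩
            have h2 : ‖e‖ = 1 := by
              rw [he, norm_smul]; simp [abs_of_pos (inv_pos.2 hqpos)]; field_simp
            rw [h2]; nlinarith [norm_nonneg (q c')]
        _ = s := mul_one s
    rw [hc₀e]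
    calc (1 - ε) * ⟪c', e⟫ ≤ (1 - ε) * s :=
          mul_le_mul_of_nonneg_left hc'e (by linarith)
      _ ≤ ‖q c₀‖ := le_of_lt hagt'

noncomputable def nextVec (C : Set H) (ε : ℝ) (T : Set H) : H :=
  Classical.epsilon (NextProp C ε T)

lemma nextVec_spec {C : Set H} {ε : ℝ} {T : Set H} (h : ∃ e, NextProp C ε T e) :
    NextProp C ε T (nextVec C ε T) :=
  Classical.epsilon_spec h

noncomputable def seqv (C : Set H) (ε : ℝ) (α : Ordinal.{u}) : H :=
  nextVec C ε (Set.range fun β : Iio α => seqv C ε β.1)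
termination_by α
decreasing_by exact β.2

lemma seqv_eq (C : Set H) (ε : ℝ) (α : Ordinal.{u}) :
    seqv C ε α = nextVec C ε (seqv C ε '' Iio α) := by
  rw [seqv, Set.image_eq_range]

theorem exists_good_ons (C : Set H) {ε r R : ℝ} (hε : 0 < ε) (hε1 : ε < 1)
    (hr : Metric.ball (0 : H) r ⊆ C) (hr0 : 0 < r) (hR : ∀ c ∈ C, ‖c‖ ≤ R) :
    ∃ (E : Set H) (o : Ordinal.{u}) (v : Ordinal.{u} → H),
      E = v '' Iio o ∧
      (∀ β < o, ‖v β‖ = 1) ∧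
      (∀ γ β, γ < β → β < o → ⟪v γ, v β⟫ = 0) ∧
      (∀ β < o, ∃ c ∈ C, c ∈ clSpan (insert (v β) (v '' Iio β)) ∧
        ∀ c' ∈ C, (1 - ε) * ⟪c', v β⟫ ≤ ⟪c, v β⟫) ∧
      clSpan E = ⊤ := by
  classical
  set v := seqv C ε with hv
  have hNP : ∀ α : Ordinal.{u}, clSpan (v '' Iio α) ≠ ⊤ → NextProp C ε (v '' Iio α) (v α) := by
    intro α hα
    rw [hv, seqv_eq]
    exact nextVec_spec (exists_nextProp C hε hε1 hr hr0 hR _ hα)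
  set Λ : Set Ordinal.{u} := {α | clSpan (v '' Iio α) = ⊤} with hΛdef
  have hΛ : Λ.Nonempty := by
    by_contra hcon
    rw [Set.not_nonempty_iff_eq_empty] at hcon
    have hall : ∀ α : Ordinal.{u}, NextProp C ε (v '' Iio α) (v α) := by
      intro α
      apply hNP
      intro htop
      have : α ∈ Λ := htop
      rw [hcon] at this
      exact this
    have horth : ∀ γ β : Ordinal.{u}, γ < β → ⟪v γ, v β⟫ = 0 := by
      intro γ β hγβ
      exact (hall β).2.1 (v γ) ⟨γ, hγβ, rfl⟩
    have hinj : Function.Injective v := by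
      intro γ β hgb
      by_contra hne
      rcases lt_or_gt_of_ne hne with h | h
      · have h0 := horth γ β h
        rw [hgb] at h0
        have h1 : ⟪v β, v β⟫ = (1:ℝ) := by
          rw [real_inner_self_eq_norm_sq, (hall β).1]; norm_num
        rw [h0] at h1; norm_num at h1
      · have h0 := horth β γ h
        rw [hgb] at h0
        have h1 : ⟪v β, v β⟫ = (1:ℝ) := by
          rw [real_inner_self_eq_norm_sq, (hall β).1]; norm_num
        rw [h0] at h1; norm_num at h1
    exact not_injective_of_ordinal v hinj
  set o := Ordinal.lt_wf.min Λ hΛ with ho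
  have hoΛ : o ∈ Λ := Ordinal.lt_wf.min_mem Λ hΛ
  have hlt : ∀ β, β < o → β ∉ Λ := fun β hβ hmem => Ordinal.lt_wf.not_lt_min Λ hmem hβ
  have hNPlt : ∀ β, β < o → NextProp C ε (v '' Iio β) (v β) := by
    intro β hβ
    exact hNP β (fun htop => hlt β hβ htop)
  refine ⟨v '' Iio o, o, v, rfl, ?_, ?_, ?_, hoΛ⟩
  · intro β hβ; exact (hNPlt β hβ).1
  · intro γ β hγβ hβ
    exact (hNPlt β hβ).2.1 (v γ) ⟨γ, hγβ, rfl⟩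
  · intro β hβ
    exact (hNPlt β hβ).2.2

end Auxiliary

set_option maxHeartbeats 2000000

/-- For every symmetric convex body `C` in a Hilbert space `H` and every `δ > 0` there
is a complete orthonormal system `E` such that `Q_{k-1}(E, C) ⊆ (3 + δ) • Q_k(E, C)` for
every integer `k ≥ 2`. -/
theorem stmt_4 {H : Type*} [NormedAddCommGroup H] [InnerProductSpace ℝ H] [CompleteSpace H]
    (C : Set H) (hCcl : IsClosed C) (hCconv : Convex ℝ C)
    (hCbdd : Bornology.IsBounded C) (hCint : (interior C).Nonempty) (hCsym : C = -C)
    (δ : ℝ) (hδ : 0 < δ) :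
    ∃ E : Set H, IsCompleteONS E ∧
      ∀ k : ℕ, 2 ≤ k →
        kConvexHullH E (k - 1) C ⊆ (3 + δ) • kConvexHullH E k C := by
  classical
  obtain ⟨x₀, hx₀⟩ := hCint
  obtain ⟨r, hr0, hrx⟩ := Metric.isOpen_iff.1 isOpen_interior x₀ hx₀
  have hnegC : ∀ c ∈ C, -c ∈ C := by
    intro c hc
    rw [hCsym]; exact Set.neg_mem_neg.2 hc
  have hrball : Metric.ball (0 : H) r ⊆ C := by
    intro y hy
    have hy' : ‖y‖ < r := by simpa [dist_eq_norm] using hy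
    have h1 : x₀ + y ∈ C := by
      apply interior_subset; apply hrx
      simpa [dist_eq_norm] using hy'
    have h2 : y - x₀ ∈ C := by
      have h3 : -(x₀ - y) ∈ C := by
        apply hnegC
        apply interior_subset; apply hrx
        simp only [Metric.mem_ball, dist_eq_norm]
        simpa [norm_sub_rev] using hy'
      simpa [neg_sub] using h3
    have h4 := hCconv h1 h2 (by norm_num : (0:ℝ) ≤ 1/2) (by norm_num : (0:ℝ) ≤ 1/2)
      (by norm_num)
    have h5 : (1/2 : ℝ) • (x₀ + y) + (1/2 : ℝ) • (y - x₀) = y := by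
      rw [smul_add, smul_sub]
      module
    rwa [h5] at h4
  have h0C : (0 : H) ∈ C := hrball (by simpa using hr0)
  obtain ⟨R, hR⟩ := isBounded_iff_forall_norm_le.1 hCbdd
  set m := min δ 1 with hm
  have hm0 : 0 < m := lt_min hδ one_pos
  have hm1 : m ≤ 1 := min_le_right _ _
  have hmδ : m ≤ δ := min_le_left _ _
  set ε := m / 16 with hε
  set η := m / 8 with hη
  have hε0 : 0 < ε := by rw [hε]; linarith
  have hε16 : ε ≤ 1 / 16 := by rw [hε]; linarith
  have hε1 : ε < 1 := by linarith
  have h1ε : 0 < 1 - ε := by linarith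
  set lam := 2 / (1 - ε) with hlam
  have hlam0 : 0 < lam := by rw [hlam]; positivity
  set μ := 1 + lam with hμ
  have hμ0 : (0:ℝ) < μ := by rw [hμ]; linarith
  have hη0 : 0 < η := by rw [hη]; linarith
  have h3δ : (0:ℝ) < 3 + δ := by linarith
  have hlam_le : lam ≤ 2 + 4 * ε := by
    rw [hlam, div_le_iff₀ h1ε]; nlinarith
  have hμη : μ * (1 + η) ≤ 3 + δ := by
    have h1 : μ ≤ 3 + 4 * ε := by rw [hμ]; linarith
    have h2 : μ * (1 + η) ≤ (3 + 4*ε) * (1 + η) := by nlinarith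
    have h3 : (3 + 4*ε)*(1+η) ≤ 3 + m := by rw [hε, hη]; nlinarith
    linarith
  obtain ⟨E, o, v, hE, hunit, horth, hkey, htop⟩ :=
    exists_good_ons C hε0 hε1 hrball hr0 hR
  have hONS : IsCompleteONS E := by
    constructor
    · rw [orthonormal_subtype_iff_ite]
      rintro x hx y hy
      rw [hE] at hx hy
      obtain ⟨γ, hγ, rfl⟩ := hx
      obtain ⟨β, hβ, rfl⟩ := hy
      by_cases hxy : v γ = v β
      · rw [if_pos hxy, hxy, real_inner_self_eq_norm_sq, hunit β hβ]; norm_num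
      · rw [if_neg hxy]
        have hγβ : γ ≠ β := fun h => hxy (by rw [h])
        rcases hγβ.lt_or_gt with h | h
        · exact horth γ β h hβ
        · rw [real_inner_comm]; exact horth β γ h hγ
    · exact htop
  refine ⟨E, hONS, ?_⟩
  intro k hk x hx
  simp only [kConvexHullH, Set.mem_iInter, Set.mem_setOf_eq, Set.mem_preimage] at hx
  have hx' : ∀ S₁ : Set H, S₁ ⊆ E → S₁.Finite → S₁.ncard = k - 1 →
      ∃ c ∈ C, projCl S₁ c = projCl S₁ x := by
    intro S₁ h1 h2 h3
    obtain ⟨c, hc, hcp⟩ := hx S₁ ⟨h1, h2, h3⟩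
    exact ⟨c, hc, hcp⟩
  refine Set.mem_smul_set.2 ⟨(3 + δ)⁻¹ • x, ?_, smul_inv_smul₀ (ne_of_gt h3δ) x⟩
  simp only [kConvexHullH, Set.mem_iInter, Set.mem_setOf_eq, Set.mem_preimage]
  rintro S ⟨hSE, hSfin, hScard⟩
  have hSne : S.Nonempty := Set.nonempty_of_ncard_ne_zero (by rw [hScard]; omega)
  haveI : FiniteDimensional ℝ (Submodule.span ℝ S) := FiniteDimensional.span_of_finite ℝ hSfin
  have hVcl : clSpan S = Submodule.span ℝ S :=
    (Submodule.span ℝ S).closed_of_finiteDimensional.submodule_topologicalClosure_eq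
  -- minimal index
  set B : Set Ordinal := {β | β < o ∧ v β ∈ S} with hB
  have hBne : B.Nonempty := by
    obtain ⟨f, hf⟩ := hSne
    have hfE : f ∈ E := hSE hf
    rw [hE] at hfE
    obtain ⟨β, hβ, rfl⟩ := hfE
    exact ⟨β, hβ, hf⟩
  set α₀ := Ordinal.lt_wf.min B hBne with hα₀def
  have hα₀B : α₀ ∈ B := Ordinal.lt_wf.min_mem B hBne
  set e₀ := v α₀ with he₀
  have hα₀o : α₀ < o := hα₀B.1
  have he₀S : e₀ ∈ S := hα₀B.2
  have hgtfact : ∀ f ∈ S, f ≠ e₀ → ∃ β, α₀ < β ∧ β < o ∧ f = v β := by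
    intro f hf hne
    have hfE : f ∈ E := hSE hf
    rw [hE] at hfE
    obtain ⟨β, hβ, rfl⟩ := hfE
    have hβB : β ∈ B := ⟨hβ, hf⟩
    have h1 : ¬ β < α₀ := Ordinal.lt_wf.not_lt_min B hβB
    have h2 : β ≠ α₀ := fun h => hne (by rw [h])
    exact ⟨β, lt_of_le_of_ne (not_lt.1 h1) (Ne.symm h2), hβ, rfl⟩
  obtain ⟨c₀, hc₀C, hc₀mem, hdom⟩ := hkey α₀ hα₀o
  have hc₀orth : ∀ f ∈ S, f ≠ e₀ → @inner ℝ _ _ f c₀ = 0 := by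
    intro f hf hne
    obtain ⟨β, hαβ, hβo, rfl⟩ := hgtfact f hf hne
    apply inner_clSpan_zero ?_ c₀ hc₀mem
    intro t ht
    rcases Set.mem_insert_iff.1 ht with rfl | ⟨γ, hγ, rfl⟩
    · rw [real_inner_comm]; exact horth α₀ β hαβ hβo
    · rw [real_inner_comm]; exact horth γ β (lt_trans hγ hαβ) hβo
  -- the sets S' and S''
  set S' := S \ {e₀} with hS'
  have hS'E : S' ⊆ E := Set.diff_subset.trans hSE
  have hS'fin : S'.Finite := hSfin.sdiff
  have he₀S'n : e₀ ∉ S' := fun h => h.2 rfl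
  have hS'card : S'.ncard = k - 1 := by
    rw [hS', Set.ncard_diff_singleton_of_mem he₀S, hScard]
  obtain ⟨c₁, hc₁C, hc₁eq⟩ := hx' S' hS'E hS'fin hS'card
  have hS'ne : S'.Nonempty := Set.nonempty_of_ncard_ne_zero (by rw [hS'card]; omega)
  obtain ⟨f₁, hf₁⟩ := hS'ne
  set S'' := insert e₀ (S' \ {f₁}) with hS''
  have hS''E : S'' ⊆ E := by
    rw [hS'']
    exact Set.insert_subset (hSE he₀S) (Set.diff_subset.trans hS'E)
  have hS''fin : S''.Finite := (hS'fin.sdiff).insert _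
  have hS''card : S''.ncard = k - 1 := by
    rw [hS'', Set.ncard_insert_of_notMem (fun h => he₀S'n h.1) (hS'fin.sdiff),
      Set.ncard_diff_singleton_of_mem hf₁, hS'card]
    omega
  obtain ⟨c₂, hc₂C, hc₂eq⟩ := hx' S'' hS''E hS''fin hS''card
  have he₀S''cl : e₀ ∈ clSpan S'' :=
    Submodule.le_topologicalClosure _ (Submodule.subset_span (Set.mem_insert _ _))
  have fact2 : @inner ℝ _ _ e₀ x = @inner ℝ _ _ e₀ c₂ := by
    rw [← inner_projCl he₀S''cl x, ← inner_projCl he₀S''cl c₂, hc₂eq]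
  have hg0 : 0 ≤ @inner ℝ _ _ c₀ e₀ := by nlinarith [hdom c₀ hc₀C]
  have habs : ∀ c ∈ C, |@inner ℝ _ _ c e₀| ≤ @inner ℝ _ _ c₀ e₀ / (1 - ε) := by
    intro c hc
    have h1 := hdom c hc
    have h2 := hdom (-c) (hnegC c hc)
    rw [inner_neg_left] at h2
    rw [le_div_iff₀ h1ε]
    rcases abs_cases (@inner ℝ _ _ c e₀) with ⟨heq, _⟩ | ⟨heq, _⟩ <;> rw [heq] <;> nlinarith
  -- main estimate
  have hmain : ∀ u ∈ Submodule.span ℝ S, ∃ c ∈ C,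
      @inner ℝ _ _ u x ≤ μ * @inner ℝ _ _ u c := by
    intro u hu
    have hu' : u ∈ Submodule.span ℝ (insert e₀ S') := by
      rw [hS', Set.insert_diff_singleton, Set.insert_eq_of_mem he₀S]
      exact hu
    obtain ⟨a, v', hv'span, huav⟩ := Submodule.mem_span_insert.1 hu'
    have hv'cl : v' ∈ clSpan S' := Submodule.le_topologicalClosure _ hv'span
    have fact1 : @inner ℝ _ _ v' x = @inner ℝ _ _ v' c₁ := by
      rw [← inner_projCl hv'cl x, ← inner_projCl hv'cl c₁, hc₁eq]
    have hc₀v' : @inner ℝ _ _ v' c₀ = 0 := by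
      rw [real_inner_comm]
      apply inner_clSpan_zero (T := S') ?_ v' hv'cl
      intro t ht
      rw [real_inner_comm]
      exact hc₀orth t ht.1 (fun h => ht.2 (by rw [h]; exact Set.mem_singleton _))
    have huc₀ : @inner ℝ _ _ u c₀ = a * @inner ℝ _ _ e₀ c₀ := by
      rw [huav, inner_add_left, real_inner_smul_left, hc₀v', add_zero]
    have he₀c₀ : @inner ℝ _ _ e₀ c₀ = @inner ℝ _ _ c₀ e₀ := real_inner_comm _ _
    have hux : @inner ℝ _ _ u x = a * @inner ℝ _ _ e₀ x + @inner ℝ _ _ v' x := by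
      rw [huav, inner_add_left, real_inner_smul_left]
    have huc₁ : @inner ℝ _ _ u c₁ = a * @inner ℝ _ _ e₀ c₁ + @inner ℝ _ _ v' c₁ := by
      rw [huav, inner_add_left, real_inner_smul_left]
    set c₄ : H := if 0 ≤ @inner ℝ _ _ u c₀ then c₀ else -c₀ with hc₄def
    have hc₄C : c₄ ∈ C := by
      rw [hc₄def]; split_ifs; exacts [hc₀C, hnegC c₀ hc₀C]
    have hc₄ : @inner ℝ _ _ u c₄ = |@inner ℝ _ _ u c₀| := by
      rw [hc₄def]; split_ifs with h
      · rw [abs_of_nonneg h]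
      · rw [inner_neg_right, abs_of_neg (not_le.1 h)]
    have hbound : a * (@inner ℝ _ _ e₀ c₂ - @inner ℝ _ _ e₀ c₁) ≤ lam * @inner ℝ _ _ u c₄ := by
      have h2 : |@inner ℝ _ _ e₀ c₂| ≤ @inner ℝ _ _ c₀ e₀ / (1 - ε) := by
        rw [real_inner_comm]; exact habs c₂ hc₂C
      have h1 : |@inner ℝ _ _ e₀ c₁| ≤ @inner ℝ _ _ c₀ e₀ / (1 - ε) := by
        rw [real_inner_comm]; exact habs c₁ hc₁C
      have q1 : a * @inner ℝ _ _ e₀ c₂ ≤ |a| * |@inner ℝ _ _ e₀ c₂| := by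
        rw [← abs_mul]; exact le_abs_self _
      have q2 : -(a * @inner ℝ _ _ e₀ c₁) ≤ |a| * |@inner ℝ _ _ e₀ c₁| := by
        rw [← abs_mul]; exact neg_le_abs _
      have q3 : |a| * |@inner ℝ _ _ e₀ c₂| ≤ |a| * (@inner ℝ _ _ c₀ e₀ / (1 - ε)) :=
        mul_le_mul_of_nonneg_left h2 (abs_nonneg a)
      have q4 : |a| * |@inner ℝ _ _ e₀ c₁| ≤ |a| * (@inner ℝ _ _ c₀ e₀ / (1 - ε)) :=
        mul_le_mul_of_nonneg_left h1 (abs_nonneg a)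
      have hconnect : |a| * (2 * (@inner ℝ _ _ c₀ e₀ / (1 - ε))) = lam * @inner ℝ _ _ u c₄ := by
        rw [hc₄, huc₀, abs_mul, he₀c₀, abs_of_nonneg hg0, hlam]
        field_simp
      nlinarith [q1, q2, q3, q4]
    have h1lam : (0:ℝ) < 1 + lam := by linarith
    have hsum : (1:ℝ)/(1+lam) + lam/(1+lam) = 1 := by field_simp
    have hcbC : ((1:ℝ)/(1+lam)) • c₁ + (lam/(1+lam)) • c₄ ∈ C :=
      hCconv hc₁C hc₄C (by positivity) (by positivity) hsum
    refine ⟨((1:ℝ)/(1+lam)) • c₁ + (lam/(1+lam)) • c₄, hcbC, ?_⟩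
    have hexp : μ * @inner ℝ _ _ u (((1:ℝ)/(1+lam)) • c₁ + (lam/(1+lam)) • c₄)
        = @inner ℝ _ _ u c₁ + lam * @inner ℝ _ _ u c₄ := by
      rw [inner_add_right, real_inner_smul_right, real_inner_smul_right, hμ]
      field_simp
      try ring
    rw [hexp]
    have hkey2 : @inner ℝ _ _ u x
        = @inner ℝ _ _ u c₁ + a * (@inner ℝ _ _ e₀ c₂ - @inner ℝ _ _ e₀ c₁) := by
      rw [hux, fact2, fact1, huc₁]; ring
    rw [hkey2]
    linarith
  -- separation
  set D := (projCl S) '' C with hD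
  have hDconv : Convex ℝ D := by
    rw [hD]
    have h := hCconv.linear_image ((projCl S).toLinearMap)
    simpa using h
  have hDV : ∀ y ∈ D, y ∈ clSpan S := by rintro y ⟨c, hc, rfl⟩; exact projCl_mem S c
  have h0D : (0:H) ∈ D := ⟨0, h0C, map_zero _⟩
  set K := closure (μ • D) with hK
  have hKconv : Convex ℝ K := (hDconv.smul μ).closure
  have hzK : projCl S x ∈ K := by
    by_contra hz
    obtain ⟨f, u₀, hfa, hfz⟩ := geometric_hahn_banach_closed_point hKconv isClosed_closure hz
    set w := (InnerProductSpace.toDual ℝ H).symm f with hw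
    have hfw : ∀ y : H, f y = @inner ℝ _ _ w y := by
      intro y
      rw [hw]
      exact (InnerProductSpace.toDual_symm_apply).symm
    have huuV : projCl S w ∈ Submodule.span ℝ S := by rw [← hVcl]; exact projCl_mem S w
    obtain ⟨cb, hcbC, hcb⟩ := hmain (projCl S w) huuV
    have h1 : μ • (projCl S cb) ∈ K := subset_closure (Set.smul_mem_smul_set ⟨cb, hcbC, rfl⟩)
    have h2 := hfa _ h1
    have h3 : f (projCl S x) = @inner ℝ _ _ (projCl S w) x := by
      rw [hfw]; exact (projCl_inner_comm S w x).symm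
    have h4 : f (μ • projCl S cb) = μ * @inner ℝ _ _ (projCl S w) cb := by
      rw [map_smul, smul_eq_mul, hfw, ← projCl_inner_comm S w cb]
    rw [h3] at hfz
    rw [h4] at h2
    linarith
  -- absorption
  have hz' : μ⁻¹ • projCl S x ∈ closure D := by
    have h1 : μ⁻¹ • projCl S x ∈ μ⁻¹ • K := Set.smul_mem_smul_set hzK
    have h2 : μ⁻¹ • K ⊆ closure (μ⁻¹ • (μ • D)) := by
      calc μ⁻¹ • K = (fun y : H => μ⁻¹ • y) '' closure (μ • D) := by rw [hK, Set.image_smul]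
        _ ⊆ closure ((fun y : H => μ⁻¹ • y) '' (μ • D)) :=
            image_closure_subset_closure_image (continuous_const_smul _)
        _ = closure (μ⁻¹ • (μ • D)) := by rw [Set.image_smul]
    have h3 : μ⁻¹ • (μ • D) ⊆ D := by
      rintro y ⟨z, ⟨d, hd, rfl⟩, rfl⟩
      show μ⁻¹ • μ • d ∈ D
      rwa [inv_smul_smul₀ (ne_of_gt hμ0)]
    exact closure_mono h3 (h2 h1)
  set z' := μ⁻¹ • projCl S x with hz'def
  obtain ⟨d, hdD, hdist⟩ : ∃ d ∈ D, ‖z' - d‖ < η * r := by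
    obtain ⟨d, hdD, hdd⟩ := Metric.mem_closure_iff.1 hz' (η * r) (by positivity)
    exact ⟨d, hdD, by rwa [dist_eq_norm] at hdd⟩
  have hz'V : z' ∈ clSpan S := Submodule.smul_mem _ _ (projCl_mem S x)
  have hwV : z' - d ∈ clSpan S := Submodule.sub_mem _ hz'V (hDV d hdD)
  set c' := η⁻¹ • (z' - d) with hc'def
  have hc'C : c' ∈ C := by
    apply hrball
    rw [Metric.mem_ball, dist_zero_right, hc'def, norm_smul, Real.norm_eq_abs,
      abs_of_pos (inv_pos.2 hη0)]
    calc η⁻¹ * ‖z' - d‖ < η⁻¹ * (η * r) := by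
          exact mul_lt_mul_of_pos_left hdist (inv_pos.2 hη0)
      _ = r := by field_simp
  have hc'D : c' ∈ D := ⟨c', hc'C, projCl_eq_self (Submodule.smul_mem _ _ hwV)⟩
  have h1η : (0:ℝ) < 1 + η := by linarith
  set db := ((1:ℝ)/(1+η)) • d + (η/(1+η)) • c' with hdb
  have hdbD : db ∈ D := hDconv hdD hc'D (by positivity) (by positivity) (by field_simp)
  have hzdb : projCl S x = (μ * (1+η)) • db := by
    have h5 : (1+η) • db = z' := by
      rw [hdb, smul_add, smul_smul, smul_smul]
      have e1 : (1+η) * ((1:ℝ)/(1+η)) = 1 := by field_simp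
      have e2 : (1+η) * (η/(1+η)) = η := by field_simp
      rw [e1, e2, hc'def, smul_smul, mul_inv_cancel₀ (ne_of_gt hη0), one_smul, one_smul]
      abel
    calc projCl S x = μ • z' := by rw [hz'def, smul_inv_smul₀ (ne_of_gt hμ0)]
      _ = μ • ((1+η) • db) := by rw [h5]
      _ = (μ * (1+η)) • db := by rw [smul_smul]
  set θ := (μ * (1+η)) / (3 + δ) with hθ
  have hθmem : θ ∈ Set.Icc (0:ℝ) 1 := by
    constructor
    · rw [hθ]; positivity
    · rw [hθ, div_le_one h3δ]; exact hμη
  have hθD : θ • db ∈ D := hDconv.smul_mem_of_zero_mem h0D hdbD hθmem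
  obtain ⟨c₅, hc₅C, hc₅⟩ := hθD
  refine ⟨c₅, hc₅C, ?_⟩
  rw [hc₅, map_smul, hzdb, smul_smul]
  congr 1
  rw [hθ, div_eq_inv_mul]
end

section
/- Let H be a real Hilbert space with dim H ≥ 2, let e be a unit vector in H, let η ∈ [0, 1) and let L ⊂ H be a symmetric convex body such that ρ_L(e) ≥ (1 − η)‖L‖. Then (1 − η)·L ⊆ (L ∩ span{e}) + 2·(L ∩ e^⊥), where + denotes the Minkowski sum and e^⊥ is the orthogonal complement of span{e}. -/
open Set Pointwise

/-- The radial function of a set `L`: `ρ_L(u) = max {t ≥ 0 : t • u ∈ L}`. -/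
noncomputable def radialFn {H : Type*} [NormedAddCommGroup H] [InnerProductSpace ℝ H]
    (L : Set H) (u : H) : ℝ :=
  sSup {t : ℝ | 0 ≤ t ∧ t • u ∈ L}

/-- `‖L‖ = sup_{x ∈ L} ‖x‖`. -/
noncomputable def setNorm {H : Type*} [NormedAddCommGroup H] [InnerProductSpace ℝ H]
    (L : Set H) : ℝ :=
  sSup ((fun x => ‖x‖) '' L)

/-- If `L` is a symmetric convex body in a Hilbert space of dimension at least `2`,
`e` a unit vector, `η ∈ [0,1)` and `ρ_L(e) ≥ (1 - η)‖L‖`, then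
`(1 - η) • L ⊆ (L ∩ span{e}) + 2 • (L ∩ e^⊥)`. -/
theorem stmt_7 {H : Type*} [NormedAddCommGroup H] [InnerProductSpace ℝ H] [CompleteSpace H]
    (hdim : 2 ≤ Module.rank ℝ H) (e : H) (he : ‖e‖ = 1) (η : ℝ) (hη0 : 0 ≤ η) (hη1 : η < 1)
    (L : Set H) (hLcl : IsClosed L) (hLconv : Convex ℝ L)
    (hLbdd : Bornology.IsBounded L) (hLint : (interior L).Nonempty) (hLsym : L = -L)
    (hρ : (1 - η) * setNorm L ≤ radialFn L e) :
    (1 - η) • L ⊆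
      (L ∩ (Submodule.span ℝ {e} : Set H)) + (2 : ℝ) • (L ∩ ((ℝ ∙ e)ᗮ : Set H)) := by
  have hneg : ∀ y ∈ L, -y ∈ L := by
    intro y hy
    have : -y ∈ -L := Set.neg_mem_neg.mpr hy
    rwa [← hLsym] at this
  -- 0 ∈ L
  obtain ⟨z, hz⟩ := hLint.mono interior_subset
  have h0 : (0 : H) ∈ L := by
    have := hLconv hz (hneg z hz) (by norm_num : (0:ℝ) ≤ (1/2:ℝ))
      (by norm_num : (0:ℝ) ≤ (1/2:ℝ)) (by norm_num)
    simpa [smul_neg] using this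
  -- bound on norms
  obtain ⟨C, hC⟩ := hLbdd.exists_norm_le
  -- the set defining the radial function
  set S : Set ℝ := {t : ℝ | 0 ≤ t ∧ t • e ∈ L} with hS
  have hS0 : (0 : ℝ) ∈ S := ⟨le_refl 0, by simpa using h0⟩
  have hSbdd : BddAbove S := by
    refine ⟨C, fun t ht => ?_⟩
    have := hC _ ht.2
    rwa [norm_smul, he, mul_one, Real.norm_of_nonneg ht.1] at this
  have hSclosed : IsClosed S := by
    have : S = Set.Ici (0:ℝ) ∩ (fun t : ℝ => t • e) ⁻¹' L := by
      ext t; simp [hS, Set.mem_Ici]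
    rw [this]
    exact isClosed_Ici.inter (hLcl.preimage (continuous_id.smul continuous_const))
  set ρ := radialFn L e with hρdef
  have hρmem : ρ ∈ S := hSclosed.csSup_mem ⟨0, hS0⟩ hSbdd
  have hρ0 : 0 ≤ ρ := hρmem.1
  have hρe : ρ • e ∈ L := hρmem.2
  -- any t with |t| ≤ ρ gives t • e ∈ L
  have hseg : ∀ t : ℝ, |t| ≤ ρ → t • e ∈ L := by
    intro t ht
    rcases eq_or_lt_of_le hρ0 with h | h
    · have : t = 0 := abs_eq_zero.mp (le_antisymm (by rwa [← h] at ht) (abs_nonneg t))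
      simpa [this] using h0
    · have h1 : (0:ℝ) ≤ (ρ - t) / (2 * ρ) := by
        apply div_nonneg _ (by linarith)
        have := abs_le.mp ht; linarith [this.2]
      have h2 : (0:ℝ) ≤ (ρ + t) / (2 * ρ) := by
        apply div_nonneg _ (by linarith)
        have := abs_le.mp ht; linarith [this.1]
      have h3 : (ρ - t) / (2 * ρ) + (ρ + t) / (2 * ρ) = 1 := by
        field_simp; ring
      have := hLconv (hneg _ hρe) hρe h1 h2 h3
      have heq : ((ρ - t) / (2 * ρ)) • (-(ρ • e)) + ((ρ + t) / (2 * ρ)) • (ρ • e)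
          = t • e := by
        rw [smul_neg, smul_smul, smul_smul, ← neg_smul, ← add_smul]
        congr 1
        field_simp; ring
      rwa [heq] at this
  have hη1' : (0:ℝ) ≤ 1 - η := by linarith
  -- norm bound
  have hnormL : ∀ x ∈ L, ‖x‖ ≤ setNorm L := by
    intro x hx
    apply le_csSup
    · refine ⟨C, ?_⟩
      rintro r ⟨y, hy, rfl⟩
      exact hC y hy
    · exact ⟨x, hx, rfl⟩
  intro w hw
  obtain ⟨x, hx, rfl⟩ := hw
  set c : ℝ := inner ℝ e x with hc
  have hcbound : |c| ≤ setNorm L := by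
    calc |c| ≤ ‖e‖ * ‖x‖ := abs_real_inner_le_norm e x
    _ = ‖x‖ := by rw [he, one_mul]
    _ ≤ setNorm L := hnormL x hx
  set a : H := ((1 - η) * c) • e with ha
  have haL : a ∈ L := by
    apply hseg
    rw [abs_mul, abs_of_nonneg hη1']
    calc (1 - η) * |c| ≤ (1 - η) * setNorm L := by
          exact mul_le_mul_of_nonneg_left hcbound hη1'
    _ ≤ ρ := hρ
  set b : H := (2⁻¹ : ℝ) • ((1 - η) • x - a) with hb
  have hxL : (1 - η) • x ∈ L := by
    have := hLconv hx h0 hη1' hη0 (by ring)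
    simpa using this
  have hbL : b ∈ L := by
    have := hLconv hxL (hneg a haL) (by norm_num : (0:ℝ) ≤ (2⁻¹:ℝ))
      (by norm_num : (0:ℝ) ≤ (2⁻¹:ℝ)) (by norm_num)
    have heq : (2⁻¹:ℝ) • ((1 - η) • x) + (2⁻¹:ℝ) • (-a) = b := by
      rw [hb, smul_sub, smul_neg]
      abel
    rwa [heq] at this
  have hbperp : b ∈ ((ℝ ∙ e)ᗮ : Set H) := by
    rw [SetLike.mem_coe, Submodule.mem_orthogonal_singleton_iff_inner_right]
    rw [hb, real_inner_smul_right, inner_sub_right, real_inner_smul_right, ha,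
      real_inner_smul_right, real_inner_self_eq_norm_sq, he]
    rw [← hc]; ring
  have haspan : a ∈ (Submodule.span ℝ {e} : Set H) := by
    rw [SetLike.mem_coe, Submodule.mem_span_singleton]
    exact ⟨(1 - η) * c, rfl⟩
  refine ⟨a, ⟨haL, haspan⟩, (2:ℝ) • b, Set.smul_mem_smul_set ⟨hbL, hbperp⟩, ?_⟩
  rw [hb, smul_smul]
  norm_num
end

section
/- For every integer n ≥ 2 and every symmetric convex body K ⊂ ℝⁿ there is a rotation U ∈ SO(n) such that R_k(U K) ⊆ 3·R_{k-1}(U K) for every k ∈ {2, …, n}. -/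
open Set Pointwise

/-- The coordinate subspace `F(S) = span {e_j : j ∈ S}` of `ℝⁿ`, as a set. -/
noncomputable def coordSubspace {n : ℕ} (S : Finset (Fin n)) :
    Set (EuclideanSpace ℝ (Fin n)) :=
  ↑(Submodule.span ℝ ((fun j => EuclideanSpace.single j (1 : ℝ)) '' (S : Set (Fin n))))

/-- The `k`-cross approximation of a set `K ⊆ ℝⁿ`. -/
noncomputable def kCross (n k : ℕ) (K : Set (EuclideanSpace ℝ (Fin n))) :
    Set (EuclideanSpace ℝ (Fin n)) :=
  convexHull ℝ (K ∩ ⋃ S ∈ {S : Finset (Fin n) | S.card = k}, coordSubspace S)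


lemma exists_min {n : ℕ} (g : EuclideanSpace ℝ (Fin n) → ℝ) (hg : Continuous g)
    (W : Submodule ℝ (EuclideanSpace ℝ (Fin n))) (hW : W ≠ ⊥) :
    ∃ v : EuclideanSpace ℝ (Fin n), ‖v‖ = 1 ∧ v ∈ W ∧
      ∀ w, ‖w‖ = 1 → w ∈ W → g v ≤ g w := by
  obtain ⟨u, huW, hu0⟩ := Submodule.exists_mem_ne_zero_of_ne_bot hW
  have hA : IsCompact (Metric.sphere (0 : EuclideanSpace ℝ (Fin n)) 1 ∩ W) :=
    (isCompact_sphere _ _).inter_right (Submodule.closed_of_finiteDimensional W)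
  have hne : (Metric.sphere (0 : EuclideanSpace ℝ (Fin n)) 1 ∩ W).Nonempty := by
    refine ⟨‖u‖⁻¹ • u, ?_, W.smul_mem _ huW⟩
    rw [mem_sphere_zero_iff_norm]
    exact norm_smul_inv_norm hu0
  obtain ⟨v, hv, hmin⟩ := hA.exists_isMinOn hne hg.continuousOn
  exact ⟨v, mem_sphere_zero_iff_norm.mp hv.1, hv.2,
    fun w hw1 hwW => hmin ⟨mem_sphere_zero_iff_norm.mpr hw1, hwW⟩⟩

open Classical in
noncomputable def greedy (n : ℕ) (g : EuclideanSpace ℝ (Fin n) → ℝ) (hg : Continuous g) :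
    ℕ → EuclideanSpace ℝ (Fin n)
  | k =>
    if h : (Submodule.span ℝ (Set.range fun i : Fin k => greedy n g hg i.val))ᗮ = ⊥ then 0
    else (exists_min g hg _ h).choose
  termination_by k => k
  decreasing_by all_goals exact i.isLt

lemma greedy_spec {n : ℕ} (g : EuclideanSpace ℝ (Fin n) → ℝ) (hg : Continuous g) {k : ℕ}
    (hk : k < n) :
    ‖greedy n g hg k‖ = 1 ∧
      greedy n g hg k ∈ (Submodule.span ℝ (Set.range fun i : Fin k => greedy n g hg i.val))ᗮ ∧
      ∀ w, ‖w‖ = 1 →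
        w ∈ (Submodule.span ℝ (Set.range fun i : Fin k => greedy n g hg i.val))ᗮ →
        g (greedy n g hg k) ≤ g w := by
  have hWne : (Submodule.span ℝ (Set.range fun i : Fin k => greedy n g hg i.val))ᗮ ≠ ⊥ := by
    rw [Ne, Submodule.orthogonal_eq_bot_iff]
    intro htop
    have h1 := finrank_range_le_card (R := ℝ) (fun i : Fin k => greedy n g hg i.val)
    rw [Set.finrank, htop, finrank_top, finrank_euclideanSpace_fin, Fintype.card_fin] at h1
    omega
  rw [greedy]
  rw [dif_neg hWne]
  exact (exists_min g hg _ hWne).choose_spec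

lemma mem_coordSubspace_iff {n : ℕ} {S : Finset (Fin n)} {x : EuclideanSpace ℝ (Fin n)} :
    x ∈ coordSubspace S ↔ ∀ j ∉ S, x j = 0 := by
  constructor
  · intro hx
    induction hx using Submodule.span_induction with
    | mem y hy =>
      obtain ⟨i, hiS, rfl⟩ := hy
      intro j hj
      show EuclideanSpace.single i (1:ℝ) j = 0
      rw [EuclideanSpace.single_apply]
      simp only [ite_eq_right_iff]
      intro hji
      exact absurd (hji ▸ hiS) hj
    | zero => intro j _; rfl
    | add y z _ _ hy hz => intro j hj; rw [PiLp.add_apply, hy j hj, hz j hj, add_zero]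
    | smul c y _ hy => intro j hj; rw [PiLp.smul_apply, hy j hj, smul_zero]
  · intro h
    have hx : x = ∑ j ∈ S, x j • EuclideanSpace.single j (1 : ℝ) := by
      have h1 := (EuclideanSpace.basisFun (Fin n) ℝ).sum_repr x
      simp only [EuclideanSpace.basisFun_repr, EuclideanSpace.basisFun_apply] at h1
      conv_lhs => rw [← h1]
      refine (Finset.sum_subset (Finset.subset_univ S) ?_).symm
      intro i _ hiS
      rw [h i hiS, zero_smul]
    rw [hx]
    refine Submodule.sum_mem _ fun j hj => Submodule.smul_mem _ _ (Submodule.subset_span ?_)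
    exact ⟨j, hj, rfl⟩

lemma gauge_image {n : ℕ} (U : EuclideanSpace ℝ (Fin n) ≃ₗᵢ[ℝ] EuclideanSpace ℝ (Fin n))
    (K : Set (EuclideanSpace ℝ (Fin n))) (x : EuclideanSpace ℝ (Fin n)) :
    gauge (⇑U '' K) x = gauge K (U.symm x) := by
  have key : ∀ r : ℝ, x ∈ r • (⇑U '' K) ↔ U.symm x ∈ r • K := by
    intro r
    rw [Set.mem_smul_set, Set.mem_smul_set]
    constructor
    · rintro ⟨y, ⟨z, hz, rfl⟩, rfl⟩
      exact ⟨z, hz, by rw [← map_smul, U.symm_apply_apply]⟩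
    · rintro ⟨z, hz, hzx⟩
      exact ⟨U z, ⟨z, hz, rfl⟩, by rw [← map_smul, hzx, U.apply_symm_apply]⟩
  unfold gauge
  congr 1
  ext r
  exact and_congr_right fun _ => key r

lemma gauge_smul_symm {n : ℕ} {s : Set (EuclideanSpace ℝ (Fin n))} (hs : ∀ y ∈ s, -y ∈ s)
    (r : ℝ) (x : EuclideanSpace ℝ (Fin n)) : gauge s (r • x) = |r| * gauge s x := by
  rcases le_or_gt 0 r with h | h
  · rw [abs_of_nonneg h, gauge_smul_of_nonneg h, smul_eq_mul]
  · have h1 : r • x = -((-r) • x) := by rw [neg_smul, neg_neg]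
    rw [h1, gauge_neg hs, gauge_smul_of_nonneg (by linarith), smul_eq_mul, abs_of_neg h]

lemma det_repr_symm {n : ℕ} (b : OrthonormalBasis (Fin n) ℝ (EuclideanSpace ℝ (Fin n))) :
    LinearMap.det (b.repr.symm.toLinearEquiv : EuclideanSpace ℝ (Fin n) →ₗ[ℝ]
      EuclideanSpace ℝ (Fin n)) = (EuclideanSpace.basisFun (Fin n) ℝ).toBasis.det ⇑b := by
  classical
  rw [← LinearMap.det_toMatrix (EuclideanSpace.basisFun (Fin n) ℝ).toBasis, Module.Basis.det_apply]
  congr 1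
  ext i j
  rw [LinearMap.toMatrix_apply, Module.Basis.toMatrix_apply]
  simp [OrthonormalBasis.coe_toBasis, EuclideanSpace.basisFun_apply,
    OrthonormalBasis.repr_symm_single]

lemma det_repr {n : ℕ} (b : OrthonormalBasis (Fin n) ℝ (EuclideanSpace ℝ (Fin n)))
    (h : (EuclideanSpace.basisFun (Fin n) ℝ).toBasis.det ⇑b = 1) :
    LinearMap.det (b.repr.toLinearEquiv : EuclideanSpace ℝ (Fin n) →ₗ[ℝ]
      EuclideanSpace ℝ (Fin n)) = 1 := by
  have h2 := det_repr_symm b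
  rw [h] at h2
  have h3 : (b.repr.toLinearEquiv : EuclideanSpace ℝ (Fin n) →ₗ[ℝ] EuclideanSpace ℝ (Fin n)) ∘ₗ
      (b.repr.symm.toLinearEquiv : EuclideanSpace ℝ (Fin n) →ₗ[ℝ] EuclideanSpace ℝ (Fin n)) =
      LinearMap.id := by
    ext x
    simp
  have h4 := LinearMap.det_comp
    (b.repr.toLinearEquiv : EuclideanSpace ℝ (Fin n) →ₗ[ℝ] EuclideanSpace ℝ (Fin n))
    (b.repr.symm.toLinearEquiv : EuclideanSpace ℝ (Fin n) →ₗ[ℝ] EuclideanSpace ℝ (Fin n))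
  rw [h3, LinearMap.det_id, h2, mul_one] at h4
  exact h4.symm


lemma greedy_orthonormal {n : ℕ} (g : EuclideanSpace ℝ (Fin n) → ℝ) (hg : Continuous g) :
    Orthonormal ℝ (fun i : Fin n => greedy n g hg i.val) := by
  classical
  rw [orthonormal_iff_ite]
  have key : ∀ i j : Fin n, i < j →
      (inner ℝ (greedy n g hg i.val) (greedy n g hg j.val) : ℝ) = 0 := by
    intro i j hij
    have hj := (greedy_spec g hg j.isLt).2.1
    have hi_mem : greedy n g hg i.val ∈
        Submodule.span ℝ (Set.range fun t : Fin j.val => greedy n g hg t.val) :=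
      Submodule.subset_span ⟨⟨i.val, hij⟩, rfl⟩
    exact (Submodule.mem_orthogonal _ _).mp hj _ hi_mem
  intro i j
  rcases lt_trichotomy i j with h | h | h
  · rw [if_neg (ne_of_lt h)]
    exact key i j h
  · subst h
    rw [if_pos rfl, real_inner_self_eq_norm_mul_norm, (greedy_spec g hg i.isLt).1, mul_one]
  · rw [if_neg (ne_of_gt h), real_inner_comm]
    exact key j i h

lemma greedy_min {n : ℕ} (g : EuclideanSpace ℝ (Fin n) → ℝ) (hg : Continuous g)
    (hhom : ∀ (r : ℝ), 0 ≤ r → ∀ x, g (r • x) = r * g x) (j : Fin n)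
    (x : EuclideanSpace ℝ (Fin n))
    (hx : x ∈ Submodule.span ℝ ((fun i : Fin n => greedy n g hg i.val) '' {i | j ≤ i})) :
    ‖x‖ * g (greedy n g hg j.val) ≤ g x := by
  rcases eq_or_ne x 0 with rfl | hx0
  · have hz : g 0 = 0 := by
      have := hhom 0 le_rfl 0
      simpa using this
    simp [hz]
  · have hxW : x ∈ (Submodule.span ℝ
        (Set.range fun t : Fin j.val => greedy n g hg t.val))ᗮ := by
      refine Submodule.span_le.mpr ?_ hx
      rintro _ ⟨i, hij, rfl⟩
      have hi := (greedy_spec g hg i.isLt).2.1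
      refine Submodule.orthogonal_le (Submodule.span_mono ?_) hi
      rintro _ ⟨t, rfl⟩
      exact ⟨⟨t.val, lt_of_lt_of_le t.isLt hij⟩, rfl⟩
    have h1 := (greedy_spec g hg j.isLt).2.2 (‖x‖⁻¹ • x) (norm_smul_inv_norm hx0)
      (Submodule.smul_mem _ _ hxW)
    rw [hhom _ (inv_nonneg.mpr (norm_nonneg x)) x] at h1
    have hx_pos : 0 < ‖x‖ := norm_pos_iff.mpr hx0
    have h2 := mul_le_mul_of_nonneg_left h1 hx_pos.le
    calc ‖x‖ * g (greedy n g hg j.val) ≤ ‖x‖ * (‖x‖⁻¹ * g x) := h2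
      _ = g x := by field_simp

lemma orthonormal_update_neg {n : ℕ} {v : Fin n → EuclideanSpace ℝ (Fin n)}
    (hv : Orthonormal ℝ v) (i0 : Fin n) :
    Orthonormal ℝ (Function.update v i0 ((-1 : ℝ) • v i0)) := by
  classical
  rw [orthonormal_iff_ite] at hv ⊢
  intro i j
  rcases eq_or_ne i j with rfl | hij
  · by_cases hi : i = i0
    · simp [Function.update_apply, hi, inner_smul_left, inner_smul_right, hv i i, hv i0 i0]
      simpa using hv i0 i0
    · simp [Function.update_apply, hi, inner_smul_left, inner_smul_right, hv i i, hv i0 i0]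
      simpa using hv i i
  · rw [if_neg hij]
    have h0 : (inner ℝ (v i) (v j) : ℝ) = 0 := by rw [hv i j, if_neg hij]
    by_cases hi : i = i0 <;> by_cases hj : j = i0
    · exact absurd (hi.trans hj.symm) hij
    · rw [hi] at h0 ⊢
      simp [Function.update_apply, hj, inner_smul_left, h0]
    · rw [hj] at h0 ⊢
      simp [Function.update_apply, hi, inner_smul_right, h0]
    · simp [Function.update_apply, hi, hj, h0]

lemma span_update_neg {n : ℕ} (v : Fin n → EuclideanSpace ℝ (Fin n)) (i0 : Fin n)
    (A : Set (Fin n)) :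
    Submodule.span ℝ (Function.update v i0 ((-1 : ℝ) • v i0) '' A) =
      Submodule.span ℝ (v '' A) := by
  classical
  apply le_antisymm
  · refine Submodule.span_le.mpr ?_
    rintro _ ⟨i, hiA, rfl⟩
    by_cases hi : i = i0
    · rw [hi, Function.update_self]
      exact Submodule.smul_mem _ _ (Submodule.subset_span ⟨i0, hi ▸ hiA, rfl⟩)
    · rw [Function.update_of_ne hi]
      exact Submodule.subset_span ⟨i, hiA, rfl⟩
  · refine Submodule.span_le.mpr ?_
    rintro _ ⟨i, hiA, rfl⟩
    by_cases hi : i = i0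
    · have hmem : Function.update v i0 ((-1 : ℝ) • v i0) i0 ∈
          Submodule.span ℝ (Function.update v i0 ((-1 : ℝ) • v i0) '' A) :=
        Submodule.subset_span ⟨i0, hi ▸ hiA, rfl⟩
      have hvi : v i = (-1 : ℝ) • Function.update v i0 ((-1 : ℝ) • v i0) i0 := by
        rw [hi, Function.update_self, smul_smul]
        norm_num
      rw [hvi]
      exact Submodule.smul_mem _ _ hmem
    · exact Submodule.subset_span ⟨i, hiA, Function.update_of_ne hi ((-1 : ℝ) • v i0) v⟩

lemma det_update_neg {n : ℕ} (v : Fin n → EuclideanSpace ℝ (Fin n)) (i0 : Fin n) :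
    (EuclideanSpace.basisFun (Fin n) ℝ).toBasis.det
        (Function.update v i0 ((-1 : ℝ) • v i0)) =
      -((EuclideanSpace.basisFun (Fin n) ℝ).toBasis.det v) := by
  classical
  rw [(EuclideanSpace.basisFun (Fin n) ℝ).toBasis.det.map_update_smul v i0 (-1 : ℝ) (v i0)]
  rw [Function.update_eq_self]
  simp

lemma abs_coord_le_norm {n : ℕ} (x : EuclideanSpace ℝ (Fin n)) (j : Fin n) : |x j| ≤ ‖x‖ := by
  have h1 : (inner ℝ (EuclideanSpace.single j (1 : ℝ)) x : ℝ) = x j := by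
    rw [EuclideanSpace.inner_single_left]
    simp
  calc |x j| = |(inner ℝ (EuclideanSpace.single j (1 : ℝ)) x : ℝ)| := by rw [h1]
    _ ≤ ‖EuclideanSpace.single j (1 : ℝ)‖ * ‖x‖ := abs_real_inner_le_norm _ _
    _ = ‖x‖ := by rw [EuclideanSpace.norm_single]; simp

lemma key_lemma {n : ℕ} (L : Set (EuclideanSpace ℝ (Fin n))) (hconv : Convex ℝ L)
    (hclosed : IsClosed L) (hnhds : L ∈ nhds (0 : EuclideanSpace ℝ (Fin n)))
    (hsym : ∀ y ∈ L, -y ∈ L)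
    (hmin : ∀ j : Fin n, ∀ x : EuclideanSpace ℝ (Fin n), (∀ i, i < j → x i = 0) →
      ‖x‖ * gauge L (EuclideanSpace.single j 1) ≤ gauge L x)
    {k : ℕ} (hk2 : 2 ≤ k) (hkn : k ≤ n) :
    kCross n k L ⊆ (3 : ℝ) • kCross n (k - 1) L := by
  classical
  have h0L : (0 : EuclideanSpace ℝ (Fin n)) ∈ L := mem_of_mem_nhds hnhds
  have habs : Absorbent ℝ L := absorbent_nhds_zero hnhds
  have hmemgauge : ∀ z, gauge L z ≤ 1 → z ∈ L := by
    intro z hz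
    have := (gauge_le_one_iff_mem_closure hconv hnhds).mp hz
    rwa [hclosed.closure_eq] at this
  have hT : Convex ℝ ((3 : ℝ) • kCross n (k - 1) L) :=
    (convex_convexHull ℝ _).smul _
  rw [kCross]
  refine convexHull_min ?_ hT
  rintro x ⟨hxL, hxU⟩
  rw [Set.mem_iUnion₂] at hxU
  obtain ⟨S, hScard, hxS⟩ := hxU
  rw [Set.mem_setOf_eq] at hScard
  -- helper to land in the (k-1)-cross
  have hmemA : ∀ (z : EuclideanSpace ℝ (Fin n)) (S' : Finset (Fin n)), S'.card = k - 1 →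
      (∀ j ∉ S', z j = 0) → z ∈ L → z ∈ kCross n (k - 1) L := by
    intro z S' hcard hz hzL
    refine subset_convexHull ℝ _ ⟨hzL, ?_⟩
    rw [Set.mem_iUnion₂]
    exact ⟨S', by rw [Set.mem_setOf_eq, hcard], mem_coordSubspace_iff.mpr hz⟩
  by_cases hx0 : x = 0
  · subst hx0
    obtain ⟨S', hS'sub, hS'card⟩ := Finset.exists_subset_card_eq (show k - 1 ≤ S.card by omega)
    have h0m : (0 : EuclideanSpace ℝ (Fin n)) ∈ kCross n (k - 1) L :=
      hmemA 0 S' hS'card (fun _ _ => rfl) h0L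
    exact Set.mem_smul_set.mpr ⟨0, h0m, by simp⟩
  · have hsupp : ∀ j ∉ S, x j = 0 := mem_coordSubspace_iff.mp hxS
    set T : Finset (Fin n) := Finset.univ.filter (fun i => x i ≠ 0) with hT_def
    have hTne : T.Nonempty := by
      rcases T.eq_empty_or_nonempty with h | h
      · exfalso
        apply hx0
        ext i
        by_contra hxi
        have : i ∈ T := Finset.mem_filter.mpr ⟨Finset.mem_univ _, hxi⟩
        rw [h] at this
        exact absurd this (Finset.notMem_empty _)
      · exact h
    set j0 := T.min' hTne with hj0_def
    have hj0T : j0 ∈ T := T.min'_mem hTne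
    have hxj0 : x j0 ≠ 0 := (Finset.mem_filter.mp hj0T).2
    have hj0S : j0 ∈ S := by
      by_contra h
      exact hxj0 (hsupp _ h)
    have hlow : ∀ i, i < j0 → x i = 0 := by
      intro i hi
      by_contra h
      exact absurd (T.min'_le i (Finset.mem_filter.mpr ⟨Finset.mem_univ _, h⟩)) (not_le.mpr hi)
    set e0 : EuclideanSpace ℝ (Fin n) := EuclideanSpace.single j0 (1 : ℝ) with he0_def
    set z : EuclideanSpace ℝ (Fin n) := x j0 • e0 with hz_def
    set y : EuclideanSpace ℝ (Fin n) := x - z with hy_def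
    set s : ℝ := |x j0| * gauge L e0 with hs_def
    have hs0 : 0 ≤ s := mul_nonneg (abs_nonneg _) (gauge_nonneg _)
    have hgz : gauge L z = s := gauge_smul_symm hsym _ _
    have hgx1 : gauge L x ≤ 1 := gauge_le_one_of_mem hxL
    have hs1 : s ≤ 1 :=
      calc s ≤ ‖x‖ * gauge L e0 :=
            mul_le_mul_of_nonneg_right (abs_coord_le_norm x j0) (gauge_nonneg _)
        _ ≤ gauge L x := hmin j0 x hlow
        _ ≤ 1 := hgx1
    have hgy : gauge L y ≤ 1 + s := by
      have h1 : gauge L y ≤ gauge L x + gauge L (-z) := by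
        have hyx : y = x + -z := by rw [hy_def, sub_eq_add_neg]
        rw [hyx]
        exact gauge_add_le hconv habs _ _
      have h2 : gauge L (-z) = s := by rw [gauge_neg hsym, hgz]
      linarith
    set lam : ℝ := (1 + s) / 3 with hlam_def
    have hlam0 : 0 < lam := by rw [hlam_def]; linarith
    have hlam1 : lam < 1 := by rw [hlam_def]; linarith
    have h3lam : 3 * lam = 1 + s := by rw [hlam_def]; ring
    have h3lam' : 3 * (1 - lam) = 2 - s := by rw [hlam_def]; ring
    set a : EuclideanSpace ℝ (Fin n) := (3 * lam)⁻¹ • y with ha_def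
    set c : EuclideanSpace ℝ (Fin n) := (3 * (1 - lam))⁻¹ • z with hc_def
    have haL : a ∈ L := by
      apply hmemgauge
      rw [ha_def, gauge_smul_of_nonneg (by positivity) y, smul_eq_mul]
      rw [h3lam]
      have h1s : (0 : ℝ) < 1 + s := by linarith
      calc (1 + s)⁻¹ * gauge L y ≤ (1 + s)⁻¹ * (1 + s) :=
            mul_le_mul_of_nonneg_left hgy (by positivity)
        _ = 1 := by field_simp
    have hcL : c ∈ L := by
      apply hmemgauge
      have h2s : (0 : ℝ) < 2 - s := by linarith
      have h3pos : (0 : ℝ) ≤ 3 * (1 - lam) := by linarith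
      rw [hc_def, gauge_smul_of_nonneg (inv_nonneg.mpr h3pos) z, smul_eq_mul, h3lam', hgz]
      rw [inv_mul_le_iff₀ h2s, mul_one]
      linarith
    obtain ⟨j1, hj1S, hj1ne⟩ : ∃ j1 ∈ S, j1 ≠ j0 :=
      Finset.exists_mem_ne (by omega) j0
    have hyS : ∀ i ∉ S.erase j0, y i = 0 := by
      intro i hi
      rw [hy_def, PiLp.sub_apply, hz_def, PiLp.smul_apply, he0_def,
        EuclideanSpace.single_apply]
      by_cases hij : i = j0
      · rw [hij]
        simp
      · have hiS : i ∉ S := by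
          intro h
          exact hi (Finset.mem_erase.mpr ⟨hij, h⟩)
        rw [if_neg hij, hsupp i hiS]
        simp
    have hzS : ∀ i ∉ S.erase j1, z i = 0 := by
      intro i hi
      rw [hz_def, PiLp.smul_apply, he0_def, EuclideanSpace.single_apply]
      by_cases hij : i = j0
      · exact absurd (Finset.mem_erase.mpr ⟨hij ▸ (Ne.symm hj1ne : j0 ≠ j1) , hij ▸ hj0S⟩) hi
      · rw [if_neg hij]
        simp
    have hcard0 : (S.erase j0).card = k - 1 := by
      rw [Finset.card_erase_of_mem hj0S, hScard]
    have hcard1 : (S.erase j1).card = k - 1 := by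
      rw [Finset.card_erase_of_mem hj1S, hScard]
    have haA : a ∈ kCross n (k - 1) L := by
      refine hmemA a (S.erase j0) hcard0 ?_ haL
      intro i hi
      rw [ha_def, PiLp.smul_apply, hyS i hi, smul_zero]
    have hcA : c ∈ kCross n (k - 1) L := by
      refine hmemA c (S.erase j1) hcard1 ?_ hcL
      intro i hi
      rw [hc_def, PiLp.smul_apply, hzS i hi, smul_zero]
    have hlamne : lam ≠ 0 := ne_of_gt hlam0
    have hlamne1 : (1 : ℝ) - lam ≠ 0 := by
      intro h
      have : lam = 1 := by linarith
      exact absurd this (ne_of_lt hlam1)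
    have hya : lam • a = (3 : ℝ)⁻¹ • y := by
      rw [ha_def, smul_smul]
      congr 1
      field_simp
    have hcc : (1 - lam) • c = (3 : ℝ)⁻¹ • z := by
      rw [hc_def, smul_smul]
      congr 1
      field_simp
    have hxcomb : x = (3 : ℝ) • (lam • a + (1 - lam) • c) := by
      calc x = y + z := by rw [hy_def, sub_add_cancel]
        _ = (3 : ℝ) • (lam • a + (1 - lam) • c) := by
            rw [hya, hcc, smul_add, smul_smul, smul_smul]
            norm_num
    refine Set.mem_smul_set.mpr ⟨lam • a + (1 - lam) • c, ?_, hxcomb.symm⟩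
    exact (convex_convexHull ℝ _) haA hcA hlam0.le (by linarith) (by ring)

lemma hmin_transfer {n : ℕ} (K : Set (EuclideanSpace ℝ (Fin n)))
    (b : OrthonormalBasis (Fin n) ℝ (EuclideanSpace ℝ (Fin n)))
    (hminK : ∀ j : Fin n, ∀ w : EuclideanSpace ℝ (Fin n),
      w ∈ Submodule.span ℝ (⇑b '' {i | j ≤ i}) → ‖w‖ * gauge K (b j) ≤ gauge K w)
    (j : Fin n) (x : EuclideanSpace ℝ (Fin n)) (hx : ∀ i, i < j → x i = 0) :
    ‖x‖ * gauge (⇑b.repr '' K) (EuclideanSpace.single j 1) ≤ gauge (⇑b.repr '' K) x := by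
  rw [gauge_image b.repr K, gauge_image b.repr K, b.repr_symm_single]
  have hw : b.repr.symm x ∈ Submodule.span ℝ (⇑b '' {i | j ≤ i}) := by
    rw [← b.sum_repr_symm]
    refine Submodule.sum_mem _ fun i _ => ?_
    by_cases hij : j ≤ i
    · exact Submodule.smul_mem _ _ (Submodule.subset_span ⟨i, hij, rfl⟩)
    · rw [hx i (lt_of_not_ge hij), zero_smul]
      exact Submodule.zero_mem _
  have h1 := hminK j _ hw
  rwa [b.repr.symm.norm_map] at h1

lemma master {n : ℕ} (hn : 2 ≤ n) (K : Set (EuclideanSpace ℝ (Fin n)))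
    (hKcomp : IsCompact K) (hKconv : Convex ℝ K)
    (hKnhds : K ∈ nhds (0 : EuclideanSpace ℝ (Fin n))) (hKsym : ∀ y ∈ K, -y ∈ K)
    (v : Fin n → EuclideanSpace ℝ (Fin n)) (hon : Orthonormal ℝ v)
    (hdet : (EuclideanSpace.basisFun (Fin n) ℝ).toBasis.det v = 1)
    (hminK : ∀ j : Fin n, ∀ x : EuclideanSpace ℝ (Fin n),
      x ∈ Submodule.span ℝ (v '' {i | j ≤ i}) → ‖x‖ * gauge K (v j) ≤ gauge K x) :
    ∃ U : EuclideanSpace ℝ (Fin n) ≃ₗᵢ[ℝ] EuclideanSpace ℝ (Fin n),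
      LinearMap.det (U.toLinearEquiv : EuclideanSpace ℝ (Fin n) →ₗ[ℝ]
        EuclideanSpace ℝ (Fin n)) = 1 ∧
      ∀ k : ℕ, 2 ≤ k → k ≤ n →
        kCross n k (⇑U '' K) ⊆ (3 : ℝ) • kCross n (k - 1) (⇑U '' K) := by
  have hne : Nonempty (Fin n) := ⟨⟨0, by omega⟩⟩
  have hsp : ⊤ ≤ Submodule.span ℝ (Set.range v) := by
    have hB := (basisOfOrthonormalOfCardEqFinrank hon
      (by simp [finrank_euclideanSpace_fin])).span_eq
    rw [coe_basisOfOrthonormalOfCardEqFinrank] at hB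
    rw [hB]
  set b : OrthonormalBasis (Fin n) ℝ (EuclideanSpace ℝ (Fin n)) :=
    OrthonormalBasis.mk hon hsp with hb_def
  have hcb : ⇑b = v := OrthonormalBasis.coe_mk hon hsp
  refine ⟨b.repr, ?_, ?_⟩
  · exact det_repr b (by rw [hcb, hdet])
  · intro k hk2 hkn
    set L : Set (EuclideanSpace ℝ (Fin n)) := ⇑b.repr '' K with hL_def
    have hconv : Convex ℝ L :=
      hKconv.is_linear_image ⟨fun p q => map_add _ p q, fun c p => map_smul _ c p⟩
    have hclosed : IsClosed L := (hKcomp.image b.repr.continuous).isClosed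
    have hnhds : L ∈ nhds (0 : EuclideanSpace ℝ (Fin n)) := by
      rw [← mem_interior_iff_mem_nhds]
      have himg : ⇑b.repr '' interior K = interior L := by
        have := b.repr.toHomeomorph.image_interior K
        simpa using this
      rw [← himg]
      exact ⟨0, mem_interior_iff_mem_nhds.mpr hKnhds, map_zero _⟩
    have hsym : ∀ y ∈ L, -y ∈ L := by
      rintro _ ⟨w, hw, rfl⟩
      exact ⟨-w, hKsym w hw, map_neg _ _⟩
    exact key_lemma L hconv hclosed hnhds hsym
      (hmin_transfer K b (by rw [hcb]; exact hminK)) hk2 hkn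

/-- For every `n ≥ 2` and every symmetric convex body `K ⊆ ℝⁿ` there is `U ∈ SO(n)` such
that `R_k(UK) ⊆ 3 • R_{k-1}(UK)` for every `k ∈ {2, …, n}`. -/
theorem stmt_9 (n : ℕ) (hn : 2 ≤ n) (K : Set (EuclideanSpace ℝ (Fin n)))
    (hKcomp : IsCompact K) (hKconv : Convex ℝ K) (hKint : (interior K).Nonempty)
    (hKsym : K = -K) :
    ∃ U : EuclideanSpace ℝ (Fin n) ≃ₗᵢ[ℝ] EuclideanSpace ℝ (Fin n),
      LinearMap.det (U.toLinearEquiv : EuclideanSpace ℝ (Fin n) →ₗ[ℝ]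
        EuclideanSpace ℝ (Fin n)) = 1 ∧
      ∀ k : ℕ, 2 ≤ k → k ≤ n →
        kCross n k (⇑U '' K) ⊆ (3 : ℝ) • kCross n (k - 1) (⇑U '' K) := by
  classical
  have hKsym' : ∀ y ∈ K, -y ∈ K := by
    intro y hy
    rw [hKsym, Set.mem_neg, neg_neg]
    exact hy
  obtain ⟨u, hu⟩ := hKint
  have hintconv : Convex ℝ (interior K) := hKconv.interior
  have hmu : -u ∈ interior K := by
    have himg : (⇑(Homeomorph.neg (EuclideanSpace ℝ (Fin n)))) '' K = K := by
      ext w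
      constructor
      · rintro ⟨p, hp, rfl⟩
        exact hKsym' p hp
      · intro hw
        exact ⟨-w, hKsym' w hw, by simp⟩
    have h2 := (Homeomorph.neg (EuclideanSpace ℝ (Fin n))).image_interior K
    have h3 : -u ∈ (⇑(Homeomorph.neg (EuclideanSpace ℝ (Fin n)))) '' interior K :=
      ⟨u, hu, by simp⟩
    rw [h2, himg] at h3
    exact h3
  have h0int : (0 : EuclideanSpace ℝ (Fin n)) ∈ interior K := by
    have h2 := hintconv hu hmu (by norm_num : (0:ℝ) ≤ 1/2) (by norm_num : (0:ℝ) ≤ 1/2)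
      (by norm_num)
    have h3 : (1/2 : ℝ) • u + (1/2 : ℝ) • (-u) = 0 := by
      rw [smul_neg]
      exact add_neg_cancel _
    rwa [h3] at h2
  have hKnhds : K ∈ nhds (0 : EuclideanSpace ℝ (Fin n)) := mem_interior_iff_mem_nhds.mp h0int
  set g : EuclideanSpace ℝ (Fin n) → ℝ := gauge K with hg_def
  have hgcont : Continuous g := continuous_gauge hKconv hKnhds
  have hhom : ∀ (r : ℝ), 0 ≤ r → ∀ x, g (r • x) = r * g x := by
    intro r hr x
    rw [hg_def, gauge_smul_of_nonneg hr, smul_eq_mul]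
  set v : Fin n → EuclideanSpace ℝ (Fin n) := fun i => greedy n g hgcont i.val with hv_def
  have hon : Orthonormal ℝ v := greedy_orthonormal g hgcont
  have hminK : ∀ j : Fin n, ∀ x : EuclideanSpace ℝ (Fin n),
      x ∈ Submodule.span ℝ (v '' {i | j ≤ i}) → ‖x‖ * gauge K (v j) ≤ gauge K x :=
    fun j x hx => greedy_min g hgcont hhom j x hx
  have hne : Nonempty (Fin n) := ⟨⟨0, by omega⟩⟩
  have hsp : ⊤ ≤ Submodule.span ℝ (Set.range v) := by
    have hB := (basisOfOrthonormalOfCardEqFinrank hon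
      (by simp [finrank_euclideanSpace_fin])).span_eq
    rw [coe_basisOfOrthonormalOfCardEqFinrank] at hB
    rw [hB]
  have hd : (EuclideanSpace.basisFun (Fin n) ℝ).toBasis.det v = 1 ∨
      (EuclideanSpace.basisFun (Fin n) ℝ).toBasis.det v = -1 := by
    have h := OrthonormalBasis.det_to_matrix_orthonormalBasis_real
      (EuclideanSpace.basisFun (Fin n) ℝ) (OrthonormalBasis.mk hon hsp)
    rwa [OrthonormalBasis.coe_mk] at h
  rcases hd with hd1 | hdm1
  · exact master hn K hKcomp hKconv hKnhds hKsym' v hon hd1 hminK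
  · set i0 : Fin n := ⟨0, by omega⟩ with hi0_def
    have hon' : Orthonormal ℝ (Function.update v i0 ((-1 : ℝ) • v i0)) :=
      orthonormal_update_neg hon i0
    have hdet' : (EuclideanSpace.basisFun (Fin n) ℝ).toBasis.det
        (Function.update v i0 ((-1 : ℝ) • v i0)) = 1 := by
      rw [det_update_neg, hdm1]
      norm_num
    have hminK' : ∀ j : Fin n, ∀ x : EuclideanSpace ℝ (Fin n),
        x ∈ Submodule.span ℝ (Function.update v i0 ((-1 : ℝ) • v i0) '' {i | j ≤ i}) →
        ‖x‖ * gauge K (Function.update v i0 ((-1 : ℝ) • v i0) j) ≤ gauge K x := by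
      intro j x hx
      rw [span_update_neg] at hx
      have hval : gauge K (Function.update v i0 ((-1 : ℝ) • v i0) j) = gauge K (v j) := by
        rw [Function.update_apply]
        by_cases hj : j = i0
        · rw [if_pos hj, hj]
          have hneg : (-1 : ℝ) • v i0 = -(v i0) := by rw [neg_smul, one_smul]
          rw [hneg, gauge_neg hKsym']
        · rw [if_neg hj]
      rw [hval]
      exact hminK j x hx
    exact master hn K hKcomp hKconv hKnhds hKsym'
      (Function.update v i0 ((-1 : ℝ) • v i0)) hon' hdet' hminK'
end

section
/- Let C be a symmetric convex body in an infinite-dimensional real Hilbert space H. For every complete orthonormal system 𝐞 = {e_γ}_{γ∈Γ} of H and every positive integer k, one has Q^k(𝐞, C) = C, where Q^k(𝐞, C) = ⋂_{S ∈ [Γ]_k} P_{Γ∖S}⁻¹(P_{Γ∖S}(C)). -/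
open Set

/-- `Q^k(E, C) = ⋂_{S ∈ [E]_k} P_{E∖S}⁻¹(P_{E∖S}(C))`: the intersection over all
`k`-element subsets `S ⊆ E` of the preimages of the projections of `C` onto the closed
spans of the complements `E ∖ S`. -/
noncomputable def kCoConvexHullH {H : Type*} [NormedAddCommGroup H] [InnerProductSpace ℝ H]
    [CompleteSpace H] (E : Set H) (k : ℕ) (C : Set H) : Set H :=
  ⋂ S ∈ {S : Set H | S ⊆ E ∧ S.Finite ∧ S.ncard = k},
    projCl (E \ S) ⁻¹' (projCl (E \ S) '' C)

open RealInnerProductSpace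

/-- For a symmetric convex body `C` in an infinite-dimensional Hilbert space `H`, every
complete orthonormal system `E` and every positive integer `k`, `Q^k(E, C) = C`. -/
theorem stmt_12 {H : Type*} [NormedAddCommGroup H] [InnerProductSpace ℝ H] [CompleteSpace H]
    (hinf : ¬ FiniteDimensional ℝ H)
    (C : Set H) (hCcl : IsClosed C) (hCconv : Convex ℝ C)
    (hCbdd : Bornology.IsBounded C) (hCint : (interior C).Nonempty) (hCsym : C = -C)
    (E : Set H) (hE : IsCompleteONS E) (k : ℕ) (hk : 0 < k) :
    kCoConvexHullH E k C = C := by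
  obtain ⟨hon, hdense⟩ := hE
  -- `E` is infinite.
  classical
  have hEinf : E.Infinite := by
    by_contra hninf
    rw [Set.not_infinite] at hninf
    have hfin := hninf
    apply hinf
    have h1 : FiniteDimensional ℝ (Submodule.span ℝ E) :=
      FiniteDimensional.span_of_finite ℝ hfin
    have h2 : (Submodule.span ℝ E) = ⊤ := by
      rw [← hdense]
      exact le_antisymm (Submodule.le_topologicalClosure _)
        (Submodule.topologicalClosure_minimal _ le_rfl
          (Submodule.closed_of_finiteDimensional _))
    rw [h2] at h1
    exact Submodule.topEquiv.finiteDimensional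
  -- inner products of elements of `E`
  have hinner : ∀ a ∈ E, ∀ b ∈ E, ⟪a, b⟫ = if a = b then (1:ℝ) else 0 := by
    intro a ha b hb
    have h := orthonormal_iff_ite.mp hon ⟨a, ha⟩ ⟨b, hb⟩
    simpa [Subtype.ext_iff] using h
  apply Set.Subset.antisymm
  · -- hard inclusion
    intro x hx
    by_contra hxC
    -- separation
    obtain ⟨f, u, hfC, hfx⟩ := geometric_hahn_banach_closed_point hCconv hCcl hxC
    set v : H := (InnerProductSpace.toDual ℝ H).symm f with hvdef
    have hv : ∀ y : H, ⟪v, y⟫ = f y := fun y => InnerProductSpace.toDual_symm_apply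
    -- constants
    set d : ℝ := f x - u with hd
    have hdpos : 0 < d := sub_pos.mpr hfx
    obtain ⟨M0, hM0⟩ := hCbdd.exists_norm_le
    set M : ℝ := max M0 0 with hMdef
    have hM : ∀ c ∈ C, ‖c‖ ≤ M := fun c hc => (hM0 c hc).trans (le_max_left _ _)
    have hMnn : (0:ℝ) ≤ M := le_max_right _ _
    have hden : (0:ℝ) < ‖x‖ + M + 1 := by positivity
    set ε : ℝ := d / (‖x‖ + M + 1) with hε
    have hεpos : 0 < ε := div_pos hdpos hden
    set δ : ℝ := ε ^ 2 / ((k : ℝ) + 1) with hδ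
    have hδpos : 0 < δ := by positivity
    -- large-coefficient set is finite
    have hsumm : Summable fun i : E => ‖⟪((↑) : E → H) i, v⟫‖ ^ 2 :=
      Orthonormal.inner_products_summable v hon
    have hFfin : {i : E | ¬ ‖⟪(i : H), v⟫‖ ^ 2 < δ}.Finite :=
      Filter.eventually_cofinite.mp
        (hsumm.tendsto_cofinite_zero.eventually_lt_const hδpos)
    have hBfin : (Subtype.val '' {i : E | ¬ ‖⟪(i : H), v⟫‖ ^ 2 < δ}).Finite :=
      hFfin.image _
    obtain ⟨S, hSsub, hSfin, hScard⟩ := (hEinf.diff hBfin).exists_subset_ncard_eq k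
    have hSE : S ⊆ E := fun e he => (hSsub he).1
    have hSsmall : ∀ e ∈ S, ‖⟪e, v⟫‖ ^ 2 < δ := by
      intro e he
      by_contra h
      exact (hSsub he).2 ⟨⟨e, hSE he⟩, h, rfl⟩
    -- the subspace and projection
    set Ksp : Submodule ℝ H := Submodule.span ℝ (E \ S) with hKsp
    haveI : CompleteSpace Ksp.topologicalClosure :=
      (Submodule.isClosed_topologicalClosure _).completeSpace_coe
    set P : H →L[ℝ] H := projCl (E \ S) with hPdef
    have hP : ∀ y : H, P y = (Submodule.orthogonalProjectionOnto Ksp.topologicalClosure y : H) :=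
      fun y => rfl
    have hPsym : ∀ y z : H, ⟪P y, z⟫ = ⟪y, P z⟫ := by
      intro y z
      rw [hP y, hP z]
      rw [← Submodule.starProjection_apply, ← Submodule.starProjection_apply]
      exact Submodule.inner_starProjection_left_eq_right _ y z
    -- the finite correction
    classical
    set S' : Finset H := hSfin.toFinset with hS'
    have hmemS' : ∀ e, e ∈ S' ↔ e ∈ S := fun e => hSfin.mem_toFinset
    set w : H := ∑ e ∈ S', ⟪e, v⟫ • e with hw
    have hjw : ∀ j ∈ S, ⟪j, w⟫ = ⟪j, v⟫ := by
      intro j hj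
      rw [hw, inner_sum]
      have : ∀ e ∈ S', ⟪j, ⟪e, v⟫ • e⟫ = if j = e then ⟪e, v⟫ else 0 := by
        intro e he
        rw [real_inner_smul_right, hinner j (hSE hj) e (hSE ((hmemS' e).mp he))]
        by_cases h : j = e <;> simp [h]
      rw [Finset.sum_congr rfl this, Finset.sum_ite_eq]
      simp [(hmemS' j).mpr hj]
    set z : H := v - w with hz
    have hjz : ∀ j ∈ S, ⟪j, z⟫ = 0 := by
      intro j hj
      rw [hz, inner_sub_right, hjw j hj, sub_self]
    -- z lies in the closed span of E \ S
    have hzK : z ∈ Ksp.topologicalClosure := by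
      set b : HilbertBasis E ℝ H := HilbertBasis.mk hon
        (by rw [Subtype.range_coe, hdense]) with hb
      have hsb := b.hasSum_repr z
      have hzc : z ∈ closure (Ksp : Set H) := by
        refine mem_closure_of_tendsto hsb (Filter.Eventually.of_forall ?_)
        intro t
        refine Submodule.sum_mem _ ?_
        intro i _
        have hbi : b i = (i : H) := by rw [hb, HilbertBasis.coe_mk]
        have hrepr : b.repr z i = ⟪(i : H), z⟫ := by
          rw [HilbertBasis.repr_apply_apply, hbi]
        by_cases hi : (i : H) ∈ S
        · rw [hrepr, hjz _ hi, hbi]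
          simp
        · rw [hbi]
          exact Submodule.smul_mem _ _ (Submodule.subset_span ⟨i.2, hi⟩)
      rwa [← SetLike.mem_coe, Submodule.topologicalClosure_coe]
    -- distance bound
    have hvz2 : ‖v - z‖ ^ 2 < ε ^ 2 := by
      have hvzw : v - z = w := by rw [hz]; abel
      have hww : ⟪w, w⟫ = ∑ e ∈ S', ⟪e, v⟫ ^ 2 := by
        rw [hw, sum_inner]
        refine Finset.sum_congr rfl ?_
        intro e he
        rw [real_inner_smul_left, ← hw, hjw e ((hmemS' e).mp he), sq]
      have hcard : S'.card = k := by
        rw [hS', ← Set.ncard_eq_toFinset_card S hSfin, hScard]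
      have hsum_lt : ∑ e ∈ S', ⟪e, v⟫ ^ 2 ≤ (k : ℝ) * δ := by
        have : ∀ e ∈ S', ⟪e, v⟫ ^ 2 ≤ δ := by
          intro e he
          have := hSsmall e ((hmemS' e).mp he)
          rw [Real.norm_eq_abs, sq_abs] at this
          exact this.le
        calc ∑ e ∈ S', ⟪e, v⟫ ^ 2 ≤ ∑ _e ∈ S', δ := Finset.sum_le_sum this
          _ = (k : ℝ) * δ := by rw [Finset.sum_const, hcard, nsmul_eq_mul]
      have hkδ : (k : ℝ) * δ < ε ^ 2 := by
        rw [hδ]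
        rw [mul_div_assoc', div_lt_iff₀ (by positivity)]
        have hε2 : 0 < ε ^ 2 := by positivity
        nlinarith [hε2]
      calc ‖v - z‖ ^ 2 = ⟪w, w⟫ := by rw [hvzw, real_inner_self_eq_norm_sq]
        _ = ∑ e ∈ S', ⟪e, v⟫ ^ 2 := hww
        _ ≤ (k : ℝ) * δ := hsum_lt
        _ < ε ^ 2 := hkδ
    have hvz : ‖v - z‖ < ε := lt_of_pow_lt_pow_left₀ 2 hεpos.le hvz2
    have hvP : ‖v - P v‖ < ε := by
      refine lt_of_le_of_lt ?_ hvz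
      rw [hP v, ← Submodule.starProjection_apply, Submodule.starProjection_minimal]
      have hbdd : BddBelow (Set.range fun w : Ksp.topologicalClosure => ‖v - (w : H)‖) := by
        refine ⟨0, ?_⟩
        rintro y ⟨w, rfl⟩
        exact norm_nonneg _
      exact ciInf_le hbdd (⟨z, hzK⟩ : Ksp.topologicalClosure)
    -- use membership of x in the intersection at S
    have hxS : P x ∈ P '' C := by
      have hmem := Set.mem_iInter.mp hx S
      have hmem2 := Set.mem_iInter.mp hmem ⟨hSE, hSfin, hScard⟩
      exact hmem2
    obtain ⟨c, hcC, hPc⟩ := hxS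
    -- final estimate
    have heq : ⟪v - P v, x - c⟫ = f x - f c := by
      have h1 : ⟪P v, x - c⟫ = 0 := by
        rw [hPsym, map_sub, hPc, sub_self, inner_zero_right]
      rw [inner_sub_left, h1, sub_zero, hv, map_sub]
    have hlow : d < ⟪v - P v, x - c⟫ := by
      rw [heq]
      have := hfC c hcC
      rw [hd]; linarith
    have hup : ⟪v - P v, x - c⟫ < d := by
      have h2 : ⟪v - P v, x - c⟫ ≤ ‖v - P v‖ * ‖x - c‖ := real_inner_le_norm _ _
      have h3 : ‖x - c‖ ≤ ‖x‖ + M :=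
        (norm_sub_le _ _).trans (by linarith [hM c hcC])
      have h4 : ‖v - P v‖ * ‖x - c‖ ≤ ε * (‖x‖ + M) :=
        mul_le_mul hvP.le h3 (norm_nonneg _) hεpos.le
      have h5 : ε * (‖x‖ + M) < ε * (‖x‖ + M + 1) :=
        mul_lt_mul_of_pos_left (by linarith) hεpos
      have h6 : ε * (‖x‖ + M + 1) = d := by
        rw [hε, div_mul_cancel₀ _ hden.ne']
      linarith
    linarith
  · -- easy inclusion
    intro x hx
    simp only [kCoConvexHullH, Set.mem_iInter, Set.mem_preimage]
    intro S _
    exact Set.mem_image_of_mem _ hx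
end
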